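/- arXiv:1111.0321 — 6 statements merged into one kernel-verified Lean document; each statement's English description precedes it below -/
import Mathlib

section
/- In a finite connected graph with local port numberings, if two nodes v and w have equal views truncated to depth n-1 (where n is the number of nodes of the graph), then their full infinite views are equal. -/
/-- A port-labeled graph on vertex type `V`: each node `v` has degree `deg v`, and
`next v p` gives, for a port `p < deg v`, the node reached by leaving `v` through
port `p` together with the entry port at that node (and `none` for invalid ports). -/
structure PGraph (V : Type) where
  deg : V → ℕ
  next : V → ℕ → Option (V × ℕ)

namespace PGraph

variable {V : Type}

/-- Observation along a port sequence: the list of entry ports encountered and the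
degree of the node finally reached (`none` if the port sequence is invalid).
The (infinite) view from a node is exactly the function `fun q => obs G v q`. -/
def obs (G : PGraph V) : V → List ℕ → Option (List ℕ × ℕ)
  | v, [] => some ([], G.deg v)
  | v, p :: q =>
    match G.next v p with
    | some (w, e) => (obs G w q).map fun r => (e :: r.1, r.2)
    | none => none

/-- Colored observation: additionally records the color of the reached node. -/
def cobs {C : Type} (G : PGraph V) (col : V → C) : V → List ℕ → Option (List ℕ × ℕ × C)
  | v, [] => some ([], G.deg v, col v)
  | v, p :: q =>
    match G.next v p with
    | some (w, e) => (cobs G col w q).map fun r => (e :: r.1, r.2)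
    | none => none

/-- Two nodes have equal views iff they give the same observation along every port
sequence. -/
def SameView (G : PGraph V) (v w : V) : Prop := ∀ q : List ℕ, G.obs v q = G.obs w q

/-- Equality of enhanced views (views with occupied nodes marked by `occ`). -/
def SameEView (G : PGraph V) (occ : V → Bool) (v w : V) : Prop :=
  ∀ q : List ℕ, G.cobs occ v q = G.cobs occ w q

/-- Equality of colored views, for an arbitrary coloring of the nodes. -/
def SameCView {C : Type} (G : PGraph V) (col : V → C) (v w : V) : Prop :=
  ∀ q : List ℕ, G.cobs col v q = G.cobs col w q

/-- The node reached by following a port sequence. -/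
def run (G : PGraph V) : V → List ℕ → Option V
  | v, [] => some v
  | v, p :: q =>
    match G.next v p with
    | some (w, _) => run G w q
    | none => none

def Connected (G : PGraph V) : Prop := ∀ v w : V, ∃ q : List ℕ, G.run v q = some w

/-- Well-formedness: ports `0,…,deg v - 1` are exactly the valid ports, entry ports are
valid ports of the target node, and the edge taken backwards by the entry port leads back. -/
def WellFormed (G : PGraph V) : Prop :=
  (∀ v p, (G.next v p).isSome ↔ p < G.deg v) ∧
  ∀ v p w e, G.next v p = some (w, e) → e < G.deg w ∧ G.next w e = some (v, p)

end PGraph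

namespace PGraph

variable {V : Type}

/-- Equality of observations along all port sequences of length at most `k`. -/
def Rk (G : PGraph V) (k : ℕ) (v w : V) : Prop :=
  ∀ q : List ℕ, q.length ≤ k → G.obs v q = G.obs w q

lemma Rk_mono (G : PGraph V) {k m : ℕ} (hkm : k ≤ m) {v w : V} (h : G.Rk m v w) :
    G.Rk k v w := fun q hq => h q (hq.trans hkm)

/-- The setoid of `k`-truncated-view equivalence. -/
def Sk (G : PGraph V) (k : ℕ) : Setoid V :=
  ⟨G.Rk k, fun _ _ _ => rfl, fun h q hq => (h q hq).symm,
    fun h1 h2 q hq => (h1 q hq).trans (h2 q hq)⟩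

lemma Rk_succ_iff (G : PGraph V) (k : ℕ) (v w : V) :
    G.Rk (k + 1) v w ↔ G.deg v = G.deg w ∧ ∀ p : ℕ,
      (G.next v p = none ∧ G.next w p = none) ∨
      ∃ v' w' e, G.next v p = some (v', e) ∧ G.next w p = some (w', e) ∧ G.Rk k v' w' := by
  constructor
  · intro h
    refine ⟨by simpa [obs] using h [] (by simp), fun p => ?_⟩
    have h1 := h [p] (by simp)
    cases hv : G.next v p with
    | none =>
      cases hw : G.next w p with
      | none => exact Or.inl ⟨rfl, rfl⟩
      | some y => simp [obs, hv, hw] at h1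
    | some x =>
      obtain ⟨v', e⟩ := x
      cases hw : G.next w p with
      | none => simp [obs, hv, hw] at h1
      | some y =>
        obtain ⟨w', e'⟩ := y
        have he : e = e' := (by simpa [obs, hv, hw] using h1 :
          e = e' ∧ G.deg v' = G.deg w').1
        subst he
        refine Or.inr ⟨v', w', e, rfl, rfl, fun q hq => ?_⟩
        have h2 := h (p :: q) (by simpa using Nat.succ_le_succ hq)
        simp only [obs, hv, hw] at h2
        have hinj : Function.Injective (fun r : List ℕ × ℕ => (e :: r.1, r.2)) := by
          rintro ⟨a1, a2⟩ ⟨b1, b2⟩ hab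
          simpa [Prod.ext_iff] using hab
        exact Option.map_injective hinj h2
  · rintro ⟨hdeg, hstep⟩ q hq
    cases q with
    | nil => simp [obs, hdeg]
    | cons p q' =>
      rcases hstep p with ⟨hv, hw⟩ | ⟨v', w', e, hv, hw, hR⟩
      · simp [obs, hv, hw]
      · simp only [obs, hv, hw]
        rw [hR q' (by simpa using Nat.le_of_succ_le_succ hq)]

lemma Rk_stab (G : PGraph V) (k : ℕ) (hk : ∀ v w, G.Rk k v w → G.Rk (k + 1) v w) :
    ∀ m, ∀ v w : V, G.Rk k v w → G.Rk m v w := by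
  intro m
  induction m with
  | zero => exact fun v w h => G.Rk_mono (Nat.zero_le k) h
  | succ m ih =>
    intro v w h
    have hk1 := (G.Rk_succ_iff k v w).mp (hk v w h)
    rw [Rk_succ_iff]
    refine ⟨hk1.1, fun p => ?_⟩
    rcases hk1.2 p with h0 | ⟨v', w', e, hv, hw, hR⟩
    · exact Or.inl h0
    · exact Or.inr ⟨v', w', e, hv, hw, ih v' w' hR⟩

lemma Rk_card_lt (G : PGraph V) [Fintype V] {k : ℕ}
    (hne : ∃ v w : V, G.Rk k v w ∧ ¬ G.Rk (k + 1) v w) :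
    Nat.card (Quotient (G.Sk k)) < Nat.card (Quotient (G.Sk (k + 1))) := by
  obtain ⟨v, w, hvw, hnvw⟩ := hne
  set f : Quotient (G.Sk (k + 1)) → Quotient (G.Sk k) :=
    Quotient.map id (fun a b hab => G.Rk_mono (Nat.le_succ k) hab) with hf
  have hsurj : Function.Surjective f := by
    intro x
    obtain ⟨a, rfl⟩ := Quotient.exists_rep x
    exact ⟨Quotient.mk _ a, rfl⟩
  have hle : Nat.card (Quotient (G.Sk k)) ≤ Nat.card (Quotient (G.Sk (k + 1))) :=
    Nat.card_le_card_of_surjective f hsurj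
  rcases hle.lt_or_eq with hlt | heq
  · exact hlt
  · exfalso
    have hbij : Function.Bijective f := hsurj.bijective_of_nat_card_le heq.ge
    have : (Quotient.mk (G.Sk (k+1)) v) = (Quotient.mk (G.Sk (k+1)) w) := by
      apply hbij.1
      exact Quotient.sound hvw
    exact hnvw (Quotient.exact this)

lemma exists_stab (G : PGraph V) [Fintype V] (v0 : V) :
    ∃ k ≤ Fintype.card V - 1, ∀ v w : V, G.Rk k v w → G.Rk (k + 1) v w := by
  by_contra hcon
  push_neg at hcon
  have key : ∀ k, k ≤ Fintype.card V → k + 1 ≤ Nat.card (Quotient (G.Sk k)) := by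
    intro k
    induction k with
    | zero =>
      intro _
      have : Nonempty (Quotient (G.Sk 0)) := ⟨Quotient.mk _ v0⟩
      exact Nat.one_le_iff_ne_zero.mpr (Nat.card_ne_zero.mpr ⟨this, inferInstance⟩)
    | succ k ih =>
      intro hk
      have h1 : k ≤ Fintype.card V - 1 := by omega
      have h2 := G.Rk_card_lt (hcon k h1)
      have := ih (by omega)
      omega
  have hcard : Nat.card (Quotient (G.Sk (Fintype.card V))) ≤ Fintype.card V := by
    have := Nat.card_le_card_of_surjective
      (Quotient.mk (G.Sk (Fintype.card V))) (Quotient.exists_rep)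
    simpa [Nat.card_eq_fintype_card] using this
  have := key (Fintype.card V) le_rfl
  omega

end PGraph

/-- In a finite connected port-labeled graph, if two nodes have equal
views truncated to depth `n - 1` (where `n` is the number of nodes), then their full
infinite views are equal. -/
theorem views_eq_of_truncated_eq {V : Type} [Fintype V] (G : PGraph V)
    (hwf : G.WellFormed) (hconn : G.Connected) (v w : V)
    (h : ∀ q : List ℕ, q.length ≤ Fintype.card V - 1 → G.obs v q = G.obs w q) :
    G.SameView v w := by
  obtain ⟨k, hk, hstab⟩ := G.exists_stab v
  have hR : G.Rk k v w := G.Rk_mono hk h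
  intro q
  exact G.Rk_stab k hstab q.length v w hR q le_rfl
end

section
/- Existence of homologs: if in an initial configuration some two distinct occupied nodes have identical enhanced views, then for every occupied node u there exists a distinct occupied node u' with an enhanced view identical to that of u. -/
namespace PGraph

variable {V : Type} {C : Type}

theorem run_append (G : PGraph V) : ∀ (q r : List ℕ) (v : V),
    G.run v (q ++ r) = (G.run v q).bind fun w => G.run w r
  | [], r, v => rfl
  | p :: q, r, v => by
    simp only [List.cons_append, run]
    cases G.next v p with
    | none => rfl
    | some we => exact run_append G q r we.1

theorem cobs_append (G : PGraph V) (col : V → C) : ∀ (q : List ℕ) (v u : V),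
    G.run v q = some u → ∃ E : List ℕ,
      ∀ r, G.cobs col v (q ++ r) = (G.cobs col u r).map fun s => (E ++ s.1, s.2)
  | [], v, u, hq => by
    refine ⟨[], fun r => ?_⟩
    simp only [run] at hq
    cases hq
    simp [Option.map_id']
  | p :: q, v, u, hq => by
    simp only [run] at hq
    rcases hwe : G.next v p with _ | ⟨w, e⟩
    · rw [hwe] at hq; exact absurd hq (by simp)
    · rw [hwe] at hq
      obtain ⟨E, hE⟩ := cobs_append G col q w u hq
      refine ⟨e :: E, fun r => ?_⟩
      show G.cobs col v (p :: (q ++ r)) = _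
      simp only [cobs, hwe, hE r, Option.map_map]
      rfl

theorem run_of_cobs (G : PGraph V) (col : V → C) : ∀ (q : List ℕ) (v : V) (x : List ℕ × ℕ × C),
    G.cobs col v q = some x → ∃ u, G.run v q = some u
  | [], v, x, _ => ⟨v, rfl⟩
  | p :: q, v, x, hx => by
    simp only [cobs] at hx
    rcases hwe : G.next v p with _ | ⟨w, e⟩
    · rw [hwe] at hx; exact absurd hx (by simp)
    · rw [hwe] at hx; dsimp only at hx
      rcases hy : G.cobs col w q with _ | y
      · rw [hy] at hx; exact absurd hx (by simp)
      · obtain ⟨u, hu⟩ := run_of_cobs G col q w y hy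
        exact ⟨u, by simp [run, hwe, hu]⟩

theorem run_back (G : PGraph V) (col : V → C) (hwf : G.WellFormed) :
    ∀ (q : List ℕ) (v u : V) (E : List ℕ) (d : ℕ) (c : C),
    G.run v q = some u → G.cobs col v q = some (E, d, c) → G.run u E.reverse = some v
  | [], v, u, E, d, c, hq, hc => by
    simp only [run] at hq; cases hq
    simp only [cobs, Option.some.injEq, Prod.mk.injEq] at hc
    rw [← hc.1]; rfl
  | p :: q, v, u, E, d, c, hq, hc => by
    simp only [run, cobs] at hq hc
    rcases hwe : G.next v p with _ | ⟨w, e⟩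
    · rw [hwe] at hq; exact absurd hq (by simp)
    · rw [hwe] at hq hc
      dsimp only at hq hc
      rcases hy : G.cobs col w q with _ | ⟨E', d', c'⟩
      · rw [hy] at hc; exact absurd hc (by simp)
      · rw [hy] at hc
        simp only [Option.map_some, Option.some.injEq, Prod.mk.injEq] at hc
        obtain ⟨hE, hd, hcc⟩ := hc
        subst hE hd hcc
        have ih := run_back G col hwf q w u E' d' c' hq hy
        rw [List.reverse_cons, run_append, ih]
        simp only [Option.bind_some, run, (hwf.2 v p w e hwe).2]

end PGraph

/-- existence of homologs.  If in an initial configuration (`occ` marks the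
nonempty set of occupied nodes) some two distinct occupied nodes have identical enhanced
views, then every occupied node `u` has a distinct occupied homolog `u'` whose enhanced
view is identical to that of `u`. -/
theorem homologs_exist {V : Type} [Fintype V] (G : PGraph V)
    (hwf : G.WellFormed) (hconn : G.Connected) (occ : V → Bool)
    (v v' : V) (hne : v ≠ v') (hv : occ v = true) (hv' : occ v' = true)
    (h : G.SameEView occ v v') :
    ∀ u : V, occ u = true → ∃ u' : V, occ u' = true ∧ u ≠ u' ∧ G.SameEView occ u u' := by
  intro u hu
  obtain ⟨q, hq⟩ := hconn v u
  obtain ⟨E, hE⟩ := G.cobs_append occ q v u hq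
  have hcv : G.cobs occ v q = some (E, G.deg u, occ u) := by simpa [PGraph.cobs] using hE []
  have hcv' : G.cobs occ v' q = some (E, G.deg u, occ u) := by rw [← h q]; exact hcv
  obtain ⟨u', hu'run⟩ := G.run_of_cobs occ q v' _ hcv'
  obtain ⟨E', hE'⟩ := G.cobs_append occ q v' u' hu'run
  have hcv'2 : G.cobs occ v' q = some (E', G.deg u', occ u') := by simpa [PGraph.cobs] using hE' []
  rw [hcv'] at hcv'2
  simp only [Option.some.injEq, Prod.mk.injEq] at hcv'2
  obtain ⟨hEE, hdd, hocc⟩ := hcv'2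
  subst hEE
  refine ⟨u', hocc ▸ hu, ?_, ?_⟩
  · intro heq
    have hb := G.run_back occ hwf q v u E (G.deg u) (occ u) hq hcv
    have hb' := G.run_back occ hwf q v' u' E (G.deg u') (occ u') hu'run (by simpa [PGraph.cobs] using hE' [])
    rw [← heq, hb] at hb'
    exact hne (Option.some.inj hb')
  · intro r
    have h1 := hE r
    rw [h (q ++ r), hE' r] at h1
    have hinj : Function.Injective (fun s : List ℕ × ℕ × Bool => (E ++ s.1, s.2)) := by
      rintro ⟨a1, a2⟩ ⟨b1, b2⟩ hab
      simp only [Prod.mk.injEq] at hab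
      exact Prod.ext (List.append_cancel_left hab.1) hab.2
    exact (Option.map_injective hinj h1.symm)
end

section
/- Two agents executing the same deterministic algorithm that are at the same node in the same round must have different memories: if their memories were equal, they would have been woken in the same round and would have traversed identical port sequences, contradicting that they started at different nodes. -/
/-- A memory box: the degree of the node reached in the current round, the (exit, entry)
ports of the move performed in this round (`none` if the agent stayed idle), and the
list of memories (each a list of memory boxes) of the other agents met in this round. -/
inductive Box : Type where
  | mk (d : ℕ) (move : Option (ℕ × ℕ)) (met : List (List Box)) : Box

/-- The memory of an agent: the sequence of its memory boxes since its wake-up. -/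
abbrev Memory : Type := List Box

/-- Effect of a chosen move at node `v`: the resulting node together with the
(exit, entry) ports of the traversed edge (`none` if the agent stays put). -/
def moveOf {V : Type} (G : PGraph V) (v : V) : Option ℕ → V × Option (ℕ × ℕ)
  | none => (v, none)
  | some p =>
    match G.next v p with
    | some (w, e) => (w, some (p, e))
    | none => (v, none)

/-- A synchronous execution, by anonymous agents indexed by `A` starting at the distinct
nodes `start a`, of the same deterministic algorithm `alg` (a function from memories to
moves: `some p` = leave by port `p`, `none` = stay idle).  The adversary wakes agent `a`
in round `advWake a`; a dormant agent is also woken when an awake agent visits its node.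
Memories are the concrete memory-box sequences: in each round one box, recording the
degree seen, the ports of the move, and the memories of all agents met, is appended. -/
structure CRunW {V A : Type} (G : PGraph V) (start : A → V)
    (alg : Memory → Option ℕ) (advWake : A → ℕ) where
  startInj : Function.Injective start
  wake : A → ℕ
  pos : A → ℕ → V
  mem : A → ℕ → Memory
  wake_le : ∀ a, wake a ≤ advWake a
  wake_visit : ∀ a, wake a < advWake a →
    ∃ b : A, b ≠ a ∧ wake b < wake a ∧ pos b (wake a) = start a
  wake_min : ∀ a t, t < wake a → ∀ b : A, b ≠ a → wake b ≤ t → pos b t ≠ start a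
  pos_before : ∀ a t, t ≤ wake a → pos a t = start a
  mem_wake : ∀ a, mem a (wake a) = [Box.mk (G.deg (start a)) none []]
  step_pos : ∀ a t, wake a ≤ t →
    pos a (t + 1) = (moveOf G (pos a t) (alg (mem a t))).1
  step_mem : ∀ a t, wake a ≤ t → ∃ met : List Memory,
    (∀ m : Memory, m ∈ met ↔
      ∃ b : A, b ≠ a ∧ wake b ≤ t ∧ pos b (t + 1) = pos a (t + 1) ∧ mem b t = m) ∧
    mem a (t + 1) = mem a t ++
      [Box.mk (G.deg (pos a (t + 1))) (moveOf G (pos a t) (alg (mem a t))).2 met]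

namespace CRunW

variable {V A : Type} {G : PGraph V} {start : A → V} {alg : Memory → Option ℕ}
  {advWake : A → ℕ}

lemma mem_length (r : CRunW G start alg advWake) (a : A) :
    ∀ t, r.wake a ≤ t → (r.mem a t).length = t - r.wake a + 1 := by
  intro t
  induction t with
  | zero =>
    intro h
    have h0 : r.wake a = 0 := Nat.le_zero.mp h
    rw [← h0, r.mem_wake a]
    simp [h0]
  | succ t ih =>
    intro h
    rcases Nat.lt_or_ge t (r.wake a) with hlt | hle
    · have heq : r.wake a = t + 1 := by omega
      rw [← heq, r.mem_wake a]
      simp [heq]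
    · obtain ⟨met, -, hstep⟩ := r.step_mem a t hle
      rw [hstep]
      simp [ih hle]
      omega

lemma mem_prefix (r : CRunW G start alg advWake) (a : A) :
    ∀ s t, r.wake a ≤ s → s ≤ t → r.mem a s <+: r.mem a t := by
  intro s t hs
  induction t with
  | zero => intro h; have : s = 0 := Nat.le_zero.mp h; subst this; exact List.prefix_rfl
  | succ t ih =>
    intro h
    rcases Nat.lt_or_ge t s with hlt | hle
    · have : s = t + 1 := by omega
      subst this; exact List.prefix_rfl
    · obtain ⟨met, -, hstep⟩ := r.step_mem a t (le_trans hs hle)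
      rw [hstep]
      exact (ih hle).trans (List.prefix_append _ _)

end CRunW

/-- two agents executing the same deterministic algorithm that are at the
same node in the same round (both being awake) must have different memories. -/
theorem collocated_memories_differ {V A : Type} [Fintype V] [Fintype A]
    (G : PGraph V) (hwf : G.WellFormed) (hconn : G.Connected)
    (start : A → V) (alg : Memory → Option ℕ) (advWake : A → ℕ)
    (r : CRunW G start alg advWake) (a b : A) (hab : a ≠ b) (t : ℕ)
    (ha : r.wake a ≤ t) (hb : r.wake b ≤ t) (hmeet : r.pos a t = r.pos b t) :
    r.mem a t ≠ r.mem b t := by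
  intro hmem
  -- same wake round
  have hla := r.mem_length a t ha
  have hlb := r.mem_length b t hb
  rw [hmem] at hla
  have hwab : r.wake a = r.wake b := by omega
  -- memories equal in every intermediate round
  have hmem_s : ∀ s, r.wake a ≤ s → s ≤ t → r.mem a s = r.mem b s := by
    intro s hs hst
    have pa := r.mem_prefix a s t hs hst
    have pb := r.mem_prefix b s t (hwab ▸ hs) hst
    have hlsa := r.mem_length a s hs
    have hlsb := r.mem_length b s (hwab ▸ hs)
    have hl : (r.mem a s).length = (r.mem b s).length := by omega
    rw [List.prefix_iff_eq_take] at pa pb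
    rw [pa, pb, hmem, hl]
  -- one backward step
  have hstep : ∀ s, r.wake a ≤ s → s < t →
      r.pos a (s+1) = r.pos b (s+1) → r.pos a s = r.pos b s := by
    intro s hs hst hpos
    obtain ⟨metA, -, hA⟩ := r.step_mem a s hs
    obtain ⟨metB, -, hB⟩ := r.step_mem b s (hwab ▸ hs)
    have hms : r.mem a s = r.mem b s := hmem_s s hs hst.le
    have h1 : r.mem a (s+1) = r.mem b (s+1) := hmem_s (s+1) (by omega) hst
    rw [hA, hB, hms] at h1
    have hbox := List.append_cancel_left h1
    simp only [List.cons.injEq, Box.mk.injEq] at hbox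
    have hmove : (moveOf G (r.pos a s) (alg (r.mem b s))).2 =
        (moveOf G (r.pos b s) (alg (r.mem b s))).2 := hbox.1.2.1
    have hpa : r.pos a (s+1) = (moveOf G (r.pos a s) (alg (r.mem b s))).1 := by
      rw [r.step_pos a s hs, hms]
    have hpb : r.pos b (s+1) = (moveOf G (r.pos b s) (alg (r.mem b s))).1 :=
      r.step_pos b s (hwab ▸ hs)
    cases hc : alg (r.mem b s) with
    | none =>
      rw [hc] at hpa hpb
      simp [moveOf] at hpa hpb
      rw [← hpa, ← hpb, hpos]
    | some p =>
      rw [hc] at hpa hpb hmove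
      cases hna : G.next (r.pos a s) p with
      | none =>
        cases hnb : G.next (r.pos b s) p with
        | none =>
          simp [moveOf, hna, hnb] at hpa hpb
          rw [← hpa, ← hpb, hpos]
        | some we =>
          exfalso
          simp [moveOf, hna, hnb] at hmove
      | some we =>
        obtain ⟨w1, e1⟩ := we
        cases hnb : G.next (r.pos b s) p with
        | none =>
          exfalso
          simp [moveOf, hna, hnb] at hmove
        | some we2 =>
          obtain ⟨w2, e2⟩ := we2
          simp [moveOf, hna, hnb] at hmove hpa hpb
          have hw : w1 = w2 := by rw [← hpa, ← hpb, hpos]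
          have h1 := (hwf.2 _ _ _ _ hna).2
          have h2 := (hwf.2 _ _ _ _ hnb).2
          rw [hw, hmove] at h1
          rw [h1] at h2
          exact (Prod.mk.injEq _ _ _ _ ▸ (Option.some.injEq _ _ ▸ h2)).1
  -- downward induction to the wake round
  have hall : ∀ k, r.wake a ≤ t - k → r.pos a (t - k) = r.pos b (t - k) := by
    intro k
    induction k with
    | zero => intro _; simpa using hmeet
    | succ k ih =>
      intro h
      by_cases hk : k < t
      · have heq : t - (k+1) + 1 = t - k := by omega
        apply hstep (t - (k+1)) h (by omega)
        rw [heq]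
        exact ih (by omega)
      · have : t - (k+1) = t - k := by omega
        rw [this]
        exact ih (this ▸ h)
  have hfin := hall (t - r.wake a) (by omega)
  have hwa : t - (t - r.wake a) = r.wake a := by omega
  rw [hwa] at hfin
  rw [r.pos_before a (r.wake a) le_rfl, r.pos_before b (r.wake a) (le_of_eq hwab)] at hfin
  exact hab (r.startInj hfin)
end

section
/- For n = 4k with k ≥ 2, the configuration D_n satisfies condition G: the cycle of size n with clockwise ports and pendant leaves (two leaves at v_0 and one leaf at every other even-indexed node), with agents at all nodes v_i with i ≡ 0 or i ≡ 3 (mod 4), has two agents with different views and all agents with pairwise distinct enhanced views. -/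
/-- Condition G of the paper: there exist agents with different views, and each agent
has a unique enhanced view (`occ` marks the nodes occupied in the initial
configuration). -/
def CondG {V A : Type} (G : PGraph V) (start : A → V) (occ : V → Bool) : Prop :=
  (∃ a b : A, ¬ G.SameView (start a) (start b)) ∧
    ∀ a b : A, a ≠ b → ¬ G.SameEView occ (start a) (start b)

/-- Configuration C's graph: a 4-cycle `v₀,v₁,v₂,v₃` (nodes `Sum.inl i`) with clockwise
ports 0,1 at each node (the edge `{vᵢ, vᵢ₊₁}` has port 0 at `vᵢ` and port 1 at `vᵢ₊₁`),
and pendant nodes of degree 1 (nodes `Sum.inr j`) attached to the two non-adjacent cycle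
nodes `v₀` and `v₂` by port 2 at the cycle node and port 0 at the leaf. -/
def graphC : PGraph (Fin 4 ⊕ Fin 2) where
  deg := fun x =>
    match x with
    | .inl i => if i.val % 2 = 0 then 3 else 2
    | .inr _ => 1
  next := fun x p =>
    match x with
    | .inl i =>
      if p = 0 then some (.inl (i + 1), 1)
      else if p = 1 then some (.inl (i - 1), 0)
      else if p = 2 ∧ i.val % 2 = 0 then
        some (.inr ⟨i.val / 2, by have := i.isLt; omega⟩, 0)
      else none
    | .inr j =>
      if p = 0 then some (.inl ⟨2 * j.val, by have := j.isLt; omega⟩, 2) else none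

/-- In configuration C the two agents start at `v₁` (a cycle node of degree 2) and at
its clockwise neighbor `v₂` (of degree 3). -/
def startC : Fin 2 → Fin 4 ⊕ Fin 2 := fun a => if a = 0 then .inl 1 else .inl 2

/-- The occupied nodes of configuration C. -/
def occC : Fin 4 ⊕ Fin 2 → Bool := fun x => decide (x = .inl 1 ∨ x = .inl 2)

/-- The graph of configuration `D n` (for even `n`): a cycle `v₀,…,v_{n-1}` (nodes
`Sum.inl i`) with clockwise ports 0,1, two pendant leaves attached to `v₀` (by ports 2
and 3 at `v₀`), and one pendant leaf attached to every other node of even index (by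
port 2).  The leaf `Sum.inr j` for `j < n / 2` is the leaf of `v_{2j}`, and
`Sum.inr (n / 2)` is the second leaf of `v₀`. -/
def graphD (n : ℕ) [NeZero n] : PGraph (Fin n ⊕ Fin (n / 2 + 1)) where
  deg := fun x =>
    match x with
    | .inl i => if i.val = 0 then 4 else if i.val % 2 = 0 then 3 else 2
    | .inr _ => 1
  next := fun x p =>
    match x with
    | .inl i =>
      if p = 0 then some (.inl (i + 1), 1)
      else if p = 1 then some (.inl (i - 1), 0)
      else if p = 2 ∧ i.val % 2 = 0 then
        some (.inr ⟨i.val / 2, by have := i.isLt; omega⟩, 0)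
      else if p = 3 ∧ i.val = 0 then some (.inr ⟨n / 2, by omega⟩, 0)
      else none
    | .inr j =>
      if p = 0 then
        if hj : j.val = n / 2 then
          some (.inl ⟨0, Nat.pos_of_ne_zero (NeZero.ne n)⟩, 3)
        else some (.inl ⟨2 * j.val, by have := j.isLt; omega⟩, 2)
      else none

/-- The agents of configuration `D n`: one agent on each cycle node `v_i` with
`i ≡ 0` or `i ≡ 3 (mod 4)`. -/
def AgentsD (n : ℕ) : Type := { i : Fin n // i.val % 4 = 0 ∨ i.val % 4 = 3 }

instance (n : ℕ) : Fintype (AgentsD n) := by unfold AgentsD; infer_instance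

/-- Starting positions of the agents of configuration `D n`. -/
def startD (n : ℕ) : AgentsD n → Fin n ⊕ Fin (n / 2 + 1) := fun a => .inl a.val

/-- The occupied nodes of configuration `D n`. -/
def occD (n : ℕ) : Fin n ⊕ Fin (n / 2 + 1) → Bool := fun x =>
  match x with
  | .inl i => decide (i.val % 4 = 0 ∨ i.val % 4 = 3)
  | .inr _ => false

open Fin.NatCast

lemma cobsD_replicate {n : ℕ} [NeZero n] {C : Type} (col : (Fin n ⊕ Fin (n/2+1)) → C)
    (m : ℕ) (i : Fin n) :
    (graphD n).cobs col (.inl i) (List.replicate m 0) =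
      some (List.replicate m 1, (graphD n).deg (.inl (i + m)), col (.inl (i + m))) := by
  induction m generalizing i with
  | zero => simp [PGraph.cobs]
  | succ m ih =>
    have hnext : (graphD n).next (.inl i) 0 = some (.inl (i+1), 1) := by
      simp [graphD]
    rw [List.replicate_succ]
    simp only [PGraph.cobs, hnext, ih]
    have : i + 1 + (m : Fin n) = i + ((m+1 : ℕ) : Fin n) := by push_cast; rw [add_assoc, add_comm (1 : Fin n)]
    simp [List.replicate_succ, this]

/-- for `n = 4k` with `k ≥ 2`, the configuration `D n` satisfies
condition G: the cycle of size `n` with clockwise ports and pendant leaves (two leaves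
at `v₀` and one leaf at every other even-indexed node), with agents at all nodes `v_i`
with `i ≡ 0` or `i ≡ 3 (mod 4)`, has two agents with different views and all agents
with pairwise distinct enhanced views. -/
theorem configD_satisfies_condG (k : ℕ) (hk : 2 ≤ k) [NeZero (4 * k)] :
    CondG (graphD (4 * k)) (startD (4 * k)) (occD (4 * k)) := by
  have hn8 : 8 ≤ 4 * k := by omega
  constructor
  · refine ⟨⟨⟨0, by omega⟩, Or.inl rfl⟩, ⟨⟨3, by omega⟩, Or.inr rfl⟩, fun h => ?_⟩
    have := h []
    simp [startD, PGraph.obs, graphD] at this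
  · rintro ⟨i, hi⟩ ⟨j, hj⟩ hne h
    have hij : i ≠ j := fun hv => hne (Subtype.ext hv)
    have key := h (List.replicate (4 * k - i.val) 0)
    simp only [startD] at key
    rw [cobsD_replicate, cobsD_replicate] at key
    have h1 : i + ((4 * k - i.val : ℕ) : Fin (4 * k)) = 0 := by
      have hs : i.val + (4 * k - i.val) = 4 * k := by have := i.isLt; omega
      calc i + ((4 * k - i.val : ℕ) : Fin (4 * k))
          = ((i.val + (4 * k - i.val) : ℕ) : Fin (4 * k)) := by
            rw [Nat.cast_add, Fin.cast_val_eq_self]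
        _ = 0 := by rw [hs, Fin.natCast_self]
    have h2 : j + ((4 * k - i.val : ℕ) : Fin (4 * k)) ≠ 0 := by
      intro hc
      exact hij (add_right_cancel (hc.trans h1.symm)).symm
    have hval : (j + ((4 * k - i.val : ℕ) : Fin (4 * k))).val ≠ 0 := fun hv => h2 (Fin.ext hv)
    rw [h1] at key
    simp only [Option.some.injEq, Prod.mk.injEq] at key
    obtain ⟨-, hdeg, -⟩ := key
    simp only [graphD, Fin.val_zero, if_pos rfl, if_neg hval, if_true] at hdeg
    split at hdeg <;> omega
end

section
/- Indistinguishability lemma: for any deterministic algorithm and any t ≥ 1, the agent starting at the degree-2 node of configuration C and the agent starting at node v_{4t-1} of configuration D_{8t} have identical memories during the first t rounds after simultaneous wake-up; likewise for the agents at the clockwise-neighbor node of C and at v_{4t} of D_{8t}. -/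
/-- A deterministic algorithm for anonymous agents, with (abstract) memory type `M`.
`init d` is the memory of a freshly woken agent seeing that its node has degree `d`;
`upd m d mv S` is the new memory given the old memory `m`, the degree `d` of the current
node, the exit/entry ports `mv` of the move just performed (`none` if the agent stayed),
and the set `S` of memories of the other agents met at the current node;
`out m` is the move chosen: leave by port `p` (`some p`) or stay idle (`none`). -/
structure Algo (M : Type) where
  init : ℕ → M
  upd : M → ℕ → Option (ℕ × ℕ) → Set M → M
  out : M → Option ℕ

/-- A synchronous execution, with simultaneous wake-up in round `0`, of the
deterministic algorithm `alg` by anonymous agents indexed by `A`, starting at the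
distinct nodes `start a`.  `pos a t` / `mem a t` are the position / memory of agent `a`
at the end of round `t`. -/
structure Run {V A M : Type} (G : PGraph V) (start : A → V) (alg : Algo M) where
  startInj : Function.Injective start
  pos : A → ℕ → V
  mem : A → ℕ → M
  pos_zero : ∀ a, pos a 0 = start a
  mem_zero : ∀ a, mem a 0 = alg.init (G.deg (start a))
  step_pos : ∀ a t, pos a (t + 1) = (moveOf G (pos a t) (alg.out (mem a t))).1
  step_mem : ∀ a t, mem a (t + 1) =
    alg.upd (mem a t) (G.deg (pos a (t + 1)))
      (moveOf G (pos a t) (alg.out (mem a t))).2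
      { m : M | ∃ b : A, b ≠ a ∧ pos b (t + 1) = pos a (t + 1) ∧ mem b t = m }

/-! ### Auxiliary development for the indistinguishability lemma -/

namespace Indist

/-- The universal "line" graph: an infinite path on `ℤ` with clockwise ports 0,1 and
a pendant leaf (port 2) at every even integer.  `Sum.inr k` is the leaf of `2*k`. -/
def U : PGraph (ℤ ⊕ ℤ) where
  deg := fun x =>
    match x with
    | .inl i => if i % 2 = 0 then 3 else 2
    | .inr _ => 1
  next := fun x p =>
    match x with
    | .inl i =>
      if p = 0 then some (.inl (i + 1), 1)
      else if p = 1 then some (.inl (i - 1), 0)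
      else if p = 2 ∧ i % 2 = 0 then some (.inr (i / 2), 0)
      else none
    | .inr k => if p = 0 then some (.inl (2 * k), 2) else none

/-- Cycle coordinate of a node of `U`. -/
def cU : ℤ ⊕ ℤ → ℤ
  | .inl i => i
  | .inr k => 2 * k

/-- Translation of `U` by `4*m`. -/
def tr (m : ℤ) : ℤ ⊕ ℤ → ℤ ⊕ ℤ
  | .inl i => .inl (i + 4 * m)
  | .inr k => .inr (k + 2 * m)

/-- Agent classes: agents sit on integers `≡ 0` or `3 (mod 4)`. -/
def Ag (j : ℤ) : Prop := j % 4 = 0 ∨ j % 4 = 3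

/-- The universal synchronous execution: `(st alg s j).1` / `(st alg s j).2` are the
position and memory at the end of round `s` of the (virtual) agent starting at `j`. -/
def st {M : Type} (alg : Algo M) : ℕ → ℤ → (ℤ ⊕ ℤ) × M
  | 0 => fun j => (.inl j, alg.init (U.deg (.inl j)))
  | s + 1 => fun j =>
      let f := st alg s
      let mv := fun i : ℤ => moveOf U (f i).1 (alg.out (f i).2)
      ((mv j).1, alg.upd (f j).2 (U.deg (mv j).1) (mv j).2
        { m | ∃ i : ℤ, Ag i ∧ i ≠ j ∧ (mv i).1 = (mv j).1 ∧ (f i).2 = m })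

lemma st_zero {M : Type} (alg : Algo M) (j : ℤ) :
    st alg 0 j = (.inl j, alg.init (U.deg (.inl j))) := rfl

lemma st_succ {M : Type} (alg : Algo M) (s : ℕ) (j : ℤ) :
    st alg (s + 1) j =
      ((moveOf U (st alg s j).1 (alg.out (st alg s j).2)).1,
        alg.upd (st alg s j).2
          (U.deg (moveOf U (st alg s j).1 (alg.out (st alg s j).2)).1)
          (moveOf U (st alg s j).1 (alg.out (st alg s j).2)).2
          { m | ∃ i : ℤ, Ag i ∧ i ≠ j ∧
              (moveOf U (st alg s i).1 (alg.out (st alg s i).2)).1 =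
              (moveOf U (st alg s j).1 (alg.out (st alg s j).2)).1 ∧
              (st alg s i).2 = m }) := rfl

lemma deg_tr (m : ℤ) (u : ℤ ⊕ ℤ) : U.deg (tr m u) = U.deg u := by
  rcases u with i | k <;> simp only [U, tr]
  have : (i + 4 * m) % 2 = i % 2 := by omega
  rw [this]

lemma next_tr (m : ℤ) (u : ℤ ⊕ ℤ) (p : ℕ) :
    U.next (tr m u) p = (U.next u p).map (fun we => (tr m we.1, we.2)) := by
  rcases u with i | k
  · simp only [U, tr]
    rcases Nat.lt_or_ge p 3 with hp | hp
    · interval_cases p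
      · simp [tr]; ring
      · simp [tr]; ring
      · have h2 : (i + 4 * m) % 2 = 0 ↔ i % 2 = 0 := by omega
        by_cases h : i % 2 = 0 <;> simp [h, h2.mpr, h2, tr]
        omega
    · have h0 : p ≠ 0 := by omega
      have h1 : p ≠ 1 := by omega
      have h2 : p ≠ 2 := by omega
      simp [h0, h1, h2]
  · simp only [U, tr]
    by_cases h : p = 0 <;> simp [h, tr]
    ring

lemma moveOf_tr (m : ℤ) (u : ℤ ⊕ ℤ) (o : Option ℕ) :
    moveOf U (tr m u) o = ((moveOf U u o).1 |> tr m, (moveOf U u o).2) := by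
  rcases o with _ | p
  · rfl
  · simp only [moveOf, next_tr]
    rcases h : U.next u p with _ | ⟨w, e⟩ <;> simp

lemma cU_tr (m : ℤ) (u : ℤ ⊕ ℤ) : cU (tr m u) = cU u + 4 * m := by
  rcases u with i | k <;> simp [cU, tr] <;> ring

lemma Ag_add (j : ℤ) (m : ℤ) : Ag (j + 4 * m) ↔ Ag j := by
  unfold Ag; omega

lemma st_tr {M : Type} (alg : Algo M) : ∀ (s : ℕ) (j m : ℤ),
    st alg s (j + 4 * m) = (tr m (st alg s j).1, (st alg s j).2) := by
  intro s
  induction s with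
  | zero =>
    intro j m
    simp only [st_zero]
    have : U.deg (.inl (j + 4 * m)) = U.deg (.inl j) := deg_tr m (.inl j)
    rw [this]; rfl
  | succ s ih =>
    intro j m
    rw [st_succ, st_succ, ih, moveOf_tr]
    refine Prod.ext rfl ?_
    simp only
    rw [deg_tr]
    congr 1
    ext x
    simp only [Set.mem_setOf_eq]
    constructor
    · rintro ⟨i, hAg, hne, hpos, hmem⟩
      refine ⟨i - 4 * m, ?_, by omega, ?_, ?_⟩
      · rw [← Ag_add (i - 4*m) m]; simpa using hAg
      · have : i = (i - 4 * m) + 4 * m := by ring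
        rw [this] at hpos
        rw [ih (i - 4*m) m, moveOf_tr] at hpos
        rcases hpos' : (moveOf U (st alg s (i - 4*m)).1 (alg.out (st alg s (i - 4*m)).2)).1 with a | b <;>
          rcases hpos'' : (moveOf U (st alg s j).1 (alg.out (st alg s j).2)).1 with a' | b' <;>
          rw [hpos', hpos''] at hpos <;> simp [tr] at hpos <;> simp [hpos]
      · have : i = (i - 4 * m) + 4 * m := by ring
        rw [this, ih (i - 4*m) m] at hmem
        exact hmem
    · rintro ⟨i, hAg, hne, hpos, hmem⟩
      refine ⟨i + 4 * m, by rw [Ag_add]; exact hAg, by omega, ?_, ?_⟩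
      · rw [ih i m, moveOf_tr, hpos]
      · rw [ih i m]; exact hmem

lemma cU_moveOf (u : ℤ ⊕ ℤ) (o : Option ℕ) :
    cU (moveOf U u o).1 ≤ cU u + 1 ∧ cU u - 1 ≤ cU (moveOf U u o).1 := by
  rcases o with _ | p
  · simp only [moveOf]; omega
  · simp only [moveOf]
    rcases u with i | k
    · simp only [U]
      rcases Nat.lt_or_ge p 3 with hp | hp
      · interval_cases p
        · simp [cU]; omega
        · simp [cU]; omega
        · by_cases h : i % 2 = 0 <;> simp [h, cU] <;> omega
      · have h0 : p ≠ 0 := by omega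
        have h1 : p ≠ 1 := by omega
        have h2 : p ≠ 2 := by omega
        simp [h0, h1, h2, cU]
    · simp only [U]
      by_cases h : p = 0 <;> simp [h, cU] <;> omega

lemma cU_st {M : Type} (alg : Algo M) (s : ℕ) (j : ℤ) :
    cU (st alg s j).1 ≤ j + s ∧ j - s ≤ cU (st alg s j).1 := by
  induction s with
  | zero => simp [st_zero, cU]
  | succ s ih =>
    rw [st_succ]
    have := cU_moveOf (st alg s j).1 (alg.out (st alg s j).2)
    push_cast
    omega

end Indist

/-! ### Projection onto configuration C -/

namespace Indist

/-- Covering projection from `U` onto the graph of configuration C. -/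
def piC : ℤ ⊕ ℤ → Fin 4 ⊕ Fin 2
  | .inl i => .inl ⟨((i + 2) % 4).toNat, by omega⟩
  | .inr k => .inr ⟨((k + 1) % 2).toNat, by omega⟩

lemma deg_piC (u : ℤ ⊕ ℤ) : graphC.deg (piC u) = U.deg u := by
  rcases u with i | k
  · simp only [graphC, U, piC]
    split_ifs <;> omega
  · rfl

lemma next_piC (u : ℤ ⊕ ℤ) (p : ℕ) :
    graphC.next (piC u) p = (U.next u p).map (fun we => (piC we.1, we.2)) := by
  rcases u with i | k
  · rcases Nat.lt_or_ge p 3 with hp | hp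
    · interval_cases p
      · simp only [graphC, U, piC, if_true]
        simp only [Option.map_some]
        refine congrArg some (Prod.ext ?_ rfl)
        simp only
        refine congrArg Sum.inl ?_
        rw [Fin.ext_iff, Fin.add_def]
        simp only [Fin.val_one]
        omega
      · simp only [graphC, U, piC]
        norm_num
        rw [Fin.ext_iff, Fin.sub_def]
        simp only [Fin.val_one]
        omega
      · simp only [graphC, U, piC]
        norm_num
        by_cases h : i % 2 = 0
        · rw [if_pos (show ((i + 2) % 4).toNat % 2 = 0 by omega),
            if_pos (show (2:ℤ) ∣ i by omega)]
          refine congrArg some (Prod.ext ?_ rfl)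
          simp only
          refine congrArg Sum.inr ?_
          rw [Fin.ext_iff]
          simp only
          omega
        · rw [if_neg (show ¬((i + 2) % 4).toNat % 2 = 0 by omega),
            if_neg (show ¬(2:ℤ) ∣ i by omega)]
    · have h0 : p ≠ 0 := by omega
      have h1 : p ≠ 1 := by omega
      have h2 : p ≠ 2 := by omega
      simp only [graphC, U, piC, if_neg h0, if_neg h1]
      rw [if_neg (by simp [h2]), if_neg (by simp [h2])]
      rfl
  · by_cases h : p = 0
    · subst h
      simp only [graphC, U, piC, if_true]
      simp only [Option.map_some]
      refine congrArg some (Prod.ext ?_ rfl)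
      simp only
      refine congrArg Sum.inl ?_
      rw [Fin.ext_iff]
      simp only
      omega
    · simp only [graphC, U, piC, if_neg h]
      rfl

lemma moveOf_piC (u : ℤ ⊕ ℤ) (o : Option ℕ) :
    moveOf graphC (piC u) o = ((moveOf U u o).1 |> piC, (moveOf U u o).2) := by
  rcases o with _ | p
  · rfl
  · simp only [moveOf, next_piC]
    rcases h : U.next u p with _ | ⟨w, e⟩ <;> simp

lemma piC_tr (m : ℤ) (u : ℤ ⊕ ℤ) : piC (tr m u) = piC u := by
  rcases u with i | k <;> simp only [piC, tr] <;>
    refine congrArg _ ?_ <;> rw [Fin.ext_iff] <;> simp only <;> omega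

lemma piC_eq_iff (u u' : ℤ ⊕ ℤ) : piC u = piC u' ↔ ∃ m : ℤ, u' = tr m u := by
  constructor
  · rcases u with i | k <;> rcases u' with i' | k' <;> simp only [piC, tr] <;> intro h
    · simp only [Sum.inl.injEq, Fin.mk.injEq] at h
      exact ⟨(i' - i) / 4, by simp only [Sum.inl.injEq]; omega⟩
    · exact absurd h (by simp)
    · exact absurd h (by simp)
    · simp only [Sum.inr.injEq, Fin.mk.injEq] at h
      exact ⟨(k' - k) / 2, by simp only [Sum.inr.injEq]; omega⟩
  · rintro ⟨m, rfl⟩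
    exact (piC_tr m u).symm

/-- The C-agent corresponding to a class. -/
def aC (j : ℤ) : Fin 2 := if j % 4 = 3 then 0 else 1

lemma startC_piC (j : ℤ) (hj : Ag j) : startC (aC j) = piC (.inl j) := by
  rcases hj with h | h
  · have : aC j = 1 := by simp [aC]; omega
    rw [this]
    simp only [startC, piC, if_neg (by decide : (1 : Fin 2) ≠ 0)]
    refine congrArg Sum.inl ?_
    rw [Fin.ext_iff]
    show (2 : ℕ) = ((j + 2) % 4).toNat
    omega
  · have : aC j = 0 := by simp [aC, h]
    rw [this]
    simp only [startC, if_pos rfl, piC]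
    refine congrArg Sum.inl ?_
    rw [Fin.ext_iff]
    show (1 : ℕ) = ((j + 2) % 4).toNat
    omega

lemma aC_eq_iff (i j : ℤ) (hi : Ag i) (hj : Ag j) : aC i = aC j ↔ i % 4 = j % 4 := by
  unfold aC
  rcases hi with h | h <;> rcases hj with h' | h' <;> simp [h, h'] <;> omega

lemma fin2_cases (y : Fin 2) : y = 0 ∨ y = 1 := by
  fin_cases y
  · exact Or.inl rfl
  · exact Or.inr rfl

lemma st_succ_fst {M : Type} (alg : Algo M) (s : ℕ) (j : ℤ) :
    (st alg (s + 1) j).1 = (moveOf U (st alg s j).1 (alg.out (st alg s j).2)).1 := rfl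

lemma tr_eq_self {m : ℤ} {u : ℤ ⊕ ℤ} (h : tr m u = u) : m = 0 := by
  have := congrArg cU h
  rw [cU_tr] at this
  omega

/-- Simulation of the run on C by the universal run. -/
lemma QC {M : Type} (alg : Algo M) (rC : Run graphC startC alg) :
    ∀ (s : ℕ) (j : ℤ), Ag j →
      rC.pos (aC j) s = piC (st alg s j).1 ∧ rC.mem (aC j) s = (st alg s j).2 := by
  intro s
  induction s with
  | zero =>
    intro j hj
    rw [rC.pos_zero, rC.mem_zero, st_zero, startC_piC j hj]
    exact ⟨rfl, by rw [deg_piC]⟩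
  | succ s ih =>
    have main : ∀ j : ℤ, Ag j → rC.pos (aC j) (s + 1) = piC (st alg (s + 1) j).1 := by
      intro j hj
      obtain ⟨hp, hm⟩ := ih j hj
      rw [rC.step_pos, hp, hm, st_succ_fst, moveOf_piC]
    intro j hj
    refine ⟨main j hj, ?_⟩
    obtain ⟨hp, hm⟩ := ih j hj
    rw [rC.step_mem, hm, hp, moveOf_piC, st_succ]
    simp only
    rw [main j hj, st_succ_fst, deg_piC]
    congr 1
    ext x
    simp only [Set.mem_setOf_eq]
    constructor
    · rintro ⟨b, hbne, hbpos, hbmem⟩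
      -- b is the other C agent; pick the other class near j
      set i₀ : ℤ := if j % 4 = 3 then j + 1 else j + 3 with hi₀
      have hAgi₀ : Ag i₀ := by unfold Ag at hj ⊢; rcases hj with h | h <;> simp [hi₀] <;> omega
      have hcls : i₀ % 4 ≠ j % 4 := by
        unfold Ag at hj; rcases hj with h | h <;> simp [hi₀] <;> omega
      have hne2 : aC i₀ ≠ aC j := fun hc => hcls ((aC_eq_iff i₀ j hAgi₀ hj).mp hc)
      have hb : b = aC i₀ := by
        rcases fin2_cases b with h1 | h1 <;> rcases fin2_cases (aC j) with h2 | h2 <;>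
          rcases fin2_cases (aC i₀) with h3 | h3 <;> simp_all
      obtain ⟨hp₀, hm₀⟩ := ih i₀ hAgi₀
      have hmain₀ := main i₀ hAgi₀
      rw [hb] at hbpos hbmem
      rw [hmain₀] at hbpos
      rw [← st_succ_fst] at hbpos
      obtain ⟨m, hm'⟩ := (piC_eq_iff _ _).mp hbpos
      refine ⟨i₀ + 4 * m, by rw [Ag_add]; exact hAgi₀, by intro hc; apply hcls; omega, ?_, ?_⟩
      · show (st alg (s+1) (i₀ + 4 * m)).1 = (st alg (s+1) j).1
        rw [st_tr alg (s+1) i₀ m]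
        exact hm'.symm
      · show (st alg s (i₀ + 4 * m)).2 = x
        rw [st_tr]
        rw [← hm₀]
        exact hbmem
    · rintro ⟨i, hAgi, hne, hposeq, hmem⟩
      by_cases hcl : i % 4 = j % 4
      · exfalso
        obtain ⟨m, hm'⟩ : ∃ m : ℤ, i = j + 4 * m := ⟨(i - j) / 4, by omega⟩
        rw [hm', st_tr, moveOf_tr] at hposeq
        have hm0 := tr_eq_self hposeq
        omega
      · refine ⟨aC i, fun hc => hcl ((aC_eq_iff i j hAgi hj).mp hc), ?_, ?_⟩
        · show rC.pos (aC i) (s+1) = piC (moveOf U (st alg s j).1 (alg.out (st alg s j).2)).1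
          rw [main i hAgi, st_succ_fst, hposeq]
        · rw [← hmem]
          exact (ih i hAgi).2

end Indist

/-! ### Projection onto configuration D -/

namespace Indist

/-- Partial covering projection from `U` onto the graph of configuration `D (8t)`. -/
def piD (t : ℕ) [NeZero (8*t)] : ℤ ⊕ ℤ → Fin (8*t) ⊕ Fin (8*t/2+1)
  | .inl i => .inl ⟨(i % ((8*t : ℕ) : ℤ)).toNat, by
      have h8 : (8*t : ℕ) ≠ 0 := NeZero.ne _
      have h2 := Int.emod_nonneg i (by exact_mod_cast h8 : ((8*t : ℕ) : ℤ) ≠ 0)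
      have h3 := Int.emod_lt_of_pos i (by exact_mod_cast Nat.pos_of_ne_zero h8 : (0:ℤ) < ((8*t : ℕ) : ℤ))
      omega⟩
  | .inr k => .inr ⟨(k % ((8*t/2 : ℕ) : ℤ)).toNat % (8*t/2+1), Nat.mod_lt _ (Nat.succ_pos _)⟩

/-- Cycle coordinate of a node of `D (8t)`. -/
def coordD (t : ℕ) : Fin (8*t) ⊕ Fin (8*t/2+1) → ℕ
  | .inl i => i.val
  | .inr j => if j.val = 8*t/2 then 0 else 2*j.val

/-- The D-agent of a class representative in `[0, 8t)`. -/
def bD (t : ℕ) [NeZero (8*t)] (j : ℤ) : AgentsD (8*t) :=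
  if h : 0 ≤ j ∧ j < 8*t ∧ (j % 4 = 0 ∨ j % 4 = 3) then
    ⟨⟨j.toNat, by omega⟩, by show j.toNat % 4 = 0 ∨ j.toNat % 4 = 3; omega⟩
  else ⟨⟨0, Nat.pos_of_ne_zero (NeZero.ne _)⟩, Or.inl rfl⟩

lemma bD_val (t : ℕ) [NeZero (8*t)] (j : ℤ) (h0 : 0 ≤ j) (h1 : j < 8*t) (hAg : Ag j) :
    ((bD t j).1.val : ℤ) = j := by
  unfold Ag at hAg
  erw [bD, dif_pos ⟨h0, h1, hAg⟩]
  show ((j.toNat : ℕ) : ℤ) = j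
  omega

lemma bD_surj (t : ℕ) [NeZero (8*t)] (v : ℕ) (hv : v < 8*t) (hb : v % 4 = 0 ∨ v % 4 = 3) :
    (⟨⟨v, hv⟩, hb⟩ : AgentsD (8*t)) = bD t (v : ℤ) := by
  erw [bD, dif_pos (show (0:ℤ) ≤ (v:ℤ) ∧ ((v:ℤ) < 8*(t:ℤ) ∧ ((v:ℤ) % 4 = 0 ∨ (v:ℤ) % 4 = 3))
    from ⟨by omega, by omega, by omega⟩)]
  apply Subtype.ext
  apply Fin.ext
  show v = ((v:ℤ)).toNat
  omega

lemma bD_inj (t : ℕ) [NeZero (8*t)] (j j' : ℤ) (h0 : 0 ≤ j) (h1 : j < 8*t) (hAg : Ag j)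
    (h0' : 0 ≤ j') (h1' : j' < 8*t) (hAg' : Ag j') (h : bD t j = bD t j') : j = j' := by
  have := bD_val t j h0 h1 hAg
  have := bD_val t j' h0' h1' hAg'
  rw [h] at *
  omega

lemma deg_piD (t : ℕ) [NeZero (8*t)] (u : ℤ ⊕ ℤ)
    (hl : 1 ≤ cU u) (hr : cU u ≤ 8*t - 2) :
    (graphD (8*t)).deg (piD t u) = U.deg u := by
  have h8 : (8*t : ℕ) ≠ 0 := NeZero.ne _
  rcases u with i | k
  · simp only [cU] at hl hr
    have hmod : i % ((8*t : ℕ) : ℤ) = i := Int.emod_eq_of_lt (by omega) (by push_cast; omega)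
    simp only [graphD, U, piD, hmod]
    split_ifs <;> omega
  · rfl

lemma next_piD (t : ℕ) [NeZero (8*t)] (u : ℤ ⊕ ℤ)
    (hl : 1 ≤ cU u) (hr : cU u ≤ 8*t - 2) (p : ℕ) :
    (graphD (8*t)).next (piD t u) p = (U.next u p).map (fun we => (piD t we.1, we.2)) := by
  have h8 : (8*t : ℕ) ≠ 0 := NeZero.ne _
  have h42 : (8*t/2 : ℕ) = 4*t := by omega
  rcases u with i | k
  · simp only [cU] at hl hr
    have hmod : i % ((8*t : ℕ) : ℤ) = i := Int.emod_eq_of_lt (by omega) (by push_cast; omega)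
    rcases Nat.lt_or_ge p 4 with hp | hp
    · interval_cases p
      · -- port 0
        simp only [graphD, U, piD, hmod, if_true]
        refine congrArg some (Prod.ext ?_ rfl)
        refine congrArg Sum.inl ?_
        rw [Fin.ext_iff, Fin.add_def, Fin.val_one']
        simp only
        have hmod2 : (i + 1) % ((8*t : ℕ) : ℤ) = i + 1 :=
          Int.emod_eq_of_lt (by omega) (by push_cast; omega)
        rw [hmod2]
        have ht1 : 1 % (8*t) = 1 := Nat.mod_eq_of_lt (by omega)
        rw [ht1]
        rw [Nat.mod_eq_of_lt (by omega)]
        omega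
      · -- port 1
        simp only [graphD, U, piD, hmod]
        norm_num
        rw [Fin.ext_iff, Fin.sub_def, Fin.val_one']
        simp only
        rw [show (i - 1) % (8*(t:ℤ)) = i - 1 from Int.emod_eq_of_lt (by omega) (by omega)]
        rw [Nat.mod_eq_of_lt (show 1 < 8*t by omega)]
        rw [show 8*t - 1 + i.toNat = (i.toNat - 1) + 8*t by omega, Nat.add_mod_right,
          Nat.mod_eq_of_lt (by omega)]
        omega
      · -- port 2
        simp only [graphD, U, piD, hmod]
        norm_num
        by_cases h : i % 2 = 0
        · rw [if_pos (show i.toNat % 2 = 0 by omega), if_pos (show (2:ℤ) ∣ i by omega)]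
          refine congrArg some (Prod.ext ?_ rfl)
          refine congrArg Sum.inr ?_
          rw [Fin.ext_iff]
          simp only
          rw [show (8*(t:ℤ))/2 = 4*(t:ℤ) by omega]
          rw [show (i/2) % (4*(t:ℤ)) = i/2 from Int.emod_eq_of_lt (by omega) (by omega)]
          rw [Nat.mod_eq_of_lt (by omega)]
          omega
        · rw [if_neg (show ¬i.toNat % 2 = 0 by omega), if_neg (show ¬(2:ℤ) ∣ i by omega)]
      · -- port 3
        simp only [graphD, U, piD, hmod]
        norm_num
        omega
    · have h0 : p ≠ 0 := by omega
      have h1 : p ≠ 1 := by omega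
      have h2 : p ≠ 2 := by omega
      have h3 : p ≠ 3 := by omega
      simp only [graphD, U, piD, hmod, if_neg h0, if_neg h1]
      rw [if_neg (by simp [h2]), if_neg (by simp [h3]), if_neg (by simp [h2])]
      rfl
  · -- leaf
    simp only [cU] at hl hr
    have hk1 : 1 ≤ k := by omega
    have hk2 : k ≤ 4*t - 1 := by omega
    have hmod : k % ((8*t/2 : ℕ) : ℤ) = k := Int.emod_eq_of_lt (by omega) (by push_cast; omega)
    by_cases h : p = 0
    · subst h
      simp only [graphD, U, piD, hmod, if_true]
      rw [dif_neg (by rw [Nat.mod_eq_of_lt (by omega)]; omega)]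
      refine congrArg some (Prod.ext ?_ rfl)
      refine congrArg Sum.inl ?_
      rw [Fin.ext_iff]
      simp only
      have hmod2 : (2*k) % ((8*t : ℕ) : ℤ) = 2*k :=
        Int.emod_eq_of_lt (by omega) (by push_cast; omega)
      rw [hmod2, Nat.mod_eq_of_lt (by omega)]
      omega
    · simp only [graphD, U, piD, if_neg h]
      rfl

lemma moveOf_piD (t : ℕ) [NeZero (8*t)] (u : ℤ ⊕ ℤ)
    (hl : 1 ≤ cU u) (hr : cU u ≤ 8*t - 2) (o : Option ℕ) :
    moveOf (graphD (8*t)) (piD t u) o = ((moveOf U u o).1 |> piD t, (moveOf U u o).2) := by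
  rcases o with _ | p
  · rfl
  · simp only [moveOf, next_piD t u hl hr]
    rcases h : U.next u p with _ | ⟨w, e⟩ <;> simp

lemma piD_tr (t : ℕ) [NeZero (8*t)] (m : ℤ) (u : ℤ ⊕ ℤ) :
    piD t (tr (2*t*m) u) = piD t u := by
  have h8 : (8*t : ℕ) ≠ 0 := NeZero.ne _
  rcases u with i | k <;> simp only [piD, tr]
  · refine congrArg Sum.inl ?_
    rw [Fin.ext_iff]
    simp only
    have : (i + 4 * (2*t*m)) % ((8*t:ℕ):ℤ) = i % ((8*t:ℕ):ℤ) := by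
      have : i + 4 * (2*t*m) = i + ((8*t:ℕ):ℤ) * m := by push_cast; ring
      rw [this, Int.add_mul_emod_self_left]
    rw [this]
  · refine congrArg Sum.inr ?_
    rw [Fin.ext_iff]
    simp only
    have : (k + 2 * (2*t*m)) % ((8*t/2:ℕ):ℤ) = k % ((8*t/2:ℕ):ℤ) := by
      have h42 : ((8*t/2 : ℕ) : ℤ) = 4*t := by push_cast; omega
      have : k + 2 * (2*t*m) = k + ((8*t/2:ℕ):ℤ) * m := by rw [h42]; push_cast; ring
      rw [this, Int.add_mul_emod_self_left]
    rw [this]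

lemma piD_eq_iff (t : ℕ) [NeZero (8*t)] (u u' : ℤ ⊕ ℤ) :
    piD t u = piD t u' ↔ ∃ m : ℤ, u' = tr (2*t*m) u := by
  have h8 : (8*t : ℕ) ≠ 0 := NeZero.ne _
  constructor
  · rcases u with i | k <;> rcases u' with i' | k' <;> simp only [piD, tr] <;> intro h
    · simp only [Sum.inl.injEq, Fin.mk.injEq] at h
      have h2 := Int.emod_nonneg i (by exact_mod_cast h8 : ((8*t : ℕ) : ℤ) ≠ 0)
      have h2' := Int.emod_nonneg i' (by exact_mod_cast h8 : ((8*t : ℕ) : ℤ) ≠ 0)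
      have heq : i % ((8*t:ℕ):ℤ) = i' % ((8*t:ℕ):ℤ) := by omega
      have hdvd : ((8*t:ℕ):ℤ) ∣ (i' - i) := by
        rw [Int.dvd_iff_emod_eq_zero, Int.sub_emod, heq]
        simp
      obtain ⟨m, hm⟩ := hdvd
      refine ⟨m, ?_⟩
      simp only [Sum.inl.injEq]
      have : (4 : ℤ) * (2*t*m) = ((8*t:ℕ):ℤ) * m := by push_cast; ring
      omega
    · exact absurd h (by simp)
    · exact absurd h (by simp)
    · simp only [Sum.inr.injEq, Fin.mk.injEq] at h
      have h42 : ((8*t/2 : ℕ) : ℤ) = 4*t := by push_cast; omega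
      have h2 := Int.emod_nonneg k (by omega : ((8*t/2 : ℕ) : ℤ) ≠ 0)
      have h2' := Int.emod_nonneg k' (by omega : ((8*t/2 : ℕ) : ℤ) ≠ 0)
      have h3 := Int.emod_lt_of_pos k (by omega : (0:ℤ) < ((8*t/2 : ℕ) : ℤ))
      have h3' := Int.emod_lt_of_pos k' (by omega : (0:ℤ) < ((8*t/2 : ℕ) : ℤ))
      have hlt : (k % ((8*t/2:ℕ):ℤ)).toNat < 8*t/2+1 := by omega
      have hlt' : (k' % ((8*t/2:ℕ):ℤ)).toNat < 8*t/2+1 := by omega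
      rw [Nat.mod_eq_of_lt hlt, Nat.mod_eq_of_lt hlt'] at h
      have heq : k % ((8*t/2:ℕ):ℤ) = k' % ((8*t/2:ℕ):ℤ) := by omega
      have hdvd : ((8*t/2:ℕ):ℤ) ∣ (k' - k) := by
        rw [Int.dvd_iff_emod_eq_zero, Int.sub_emod, heq]
        simp
      obtain ⟨m, hm⟩ := hdvd
      refine ⟨m, ?_⟩
      simp only [Sum.inr.injEq]
      have : (2 : ℤ) * (2*t*m) = ((8*t/2:ℕ):ℤ) * m := by rw [h42]; ring
      omega
  · rintro ⟨m, rfl⟩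
    exact (piD_tr t m u).symm

lemma coordD_piD (t : ℕ) [NeZero (8*t)] (u : ℤ ⊕ ℤ) :
    (coordD t (piD t u) : ℤ) = cU u % ((8*t : ℕ) : ℤ) := by
  have h8 : (8*t : ℕ) ≠ 0 := NeZero.ne _
  rcases u with i | k
  · simp only [coordD, piD, cU]
    have h2 := Int.emod_nonneg i (by exact_mod_cast h8 : ((8*t : ℕ) : ℤ) ≠ 0)
    omega
  · simp only [coordD, piD, cU]
    have h42 : ((8*t/2 : ℕ) : ℤ) = 4*t := by push_cast; omega
    have h2 := Int.emod_nonneg k (by omega : ((8*t/2 : ℕ) : ℤ) ≠ 0)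
    have h3 := Int.emod_lt_of_pos k (by omega : (0:ℤ) < ((8*t/2 : ℕ) : ℤ))
    rw [Nat.mod_eq_of_lt (by omega)]
    have hmul : (2*k) % ((8*t:ℕ):ℤ) = 2 * (k % ((8*t/2:ℕ):ℤ)) := by
      have : ((8*t:ℕ):ℤ) = 2 * ((8*t/2:ℕ):ℤ) := by push_cast; omega
      rw [this, Int.mul_emod_mul_of_pos _ _ (by omega : (0:ℤ) < 2)]
    rw [hmul]
    split_ifs with hh
    · exfalso; omega
    · omega

end Indist

namespace Indist

lemma coordD_next (t : ℕ) [NeZero (8*t)] (v w : Fin (8*t) ⊕ Fin (8*t/2+1)) (p e : ℕ)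
    (h : (graphD (8*t)).next v p = some (w, e))
    (h1 : 1 ≤ coordD t w) (h2 : coordD t w ≤ 8*t - 2) :
    coordD t w ≤ coordD t v + 1 ∧ coordD t v ≤ coordD t w + 1 := by
  have h8 : (8*t : ℕ) ≠ 0 := NeZero.ne _
  rcases v with i | k
  · simp only [graphD] at h
    split_ifs at h with c0 c1 c2 c3
    · -- p = 0 : w = inl (i+1)
      simp only [Option.some.injEq, Prod.mk.injEq] at h
      obtain ⟨hw, -⟩ := h
      subst hw
      simp only [coordD] at h1 h2 ⊢
      rw [Fin.add_def, Fin.val_one'] at h1 h2 ⊢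
      simp only [Fin.val_mk] at h1 h2 ⊢
      rw [Nat.mod_eq_of_lt (show 1 < 8*t by omega)] at h1 h2 ⊢
      rcases Nat.lt_or_ge (i.val + 1) (8*t) with hlt | hge
      · rw [Nat.mod_eq_of_lt hlt] at h1 h2 ⊢; omega
      · exfalso
        have hv := i.isLt
        have hieq : i.val + 1 = 8*t := by omega
        rw [hieq, Nat.mod_self] at h1
        omega
    · -- p = 1 : w = inl (i-1)
      simp only [Option.some.injEq, Prod.mk.injEq] at h
      obtain ⟨hw, -⟩ := h
      subst hw
      simp only [coordD] at h1 h2 ⊢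
      rw [Fin.sub_def, Fin.val_one'] at h1 h2 ⊢
      simp only [Fin.val_mk] at h1 h2 ⊢
      rw [Nat.mod_eq_of_lt (show 1 < 8*t by omega)] at h1 h2 ⊢
      rcases Nat.eq_zero_or_pos i.val with hz | hpos
      · exfalso
        rw [hz] at h2
        rw [Nat.mod_eq_of_lt (by omega)] at h2
        omega
      · have : 8*t - 1 + i.val = (i.val - 1) + 8*t := by omega
        rw [this, Nat.add_mod_right, Nat.mod_eq_of_lt (by omega)] at h1 h2 ⊢
        omega
    · -- p = 2 : w = leaf of i
      simp only [Option.some.injEq, Prod.mk.injEq] at h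
      obtain ⟨hw, -⟩ := h
      subst hw
      simp only [coordD, Fin.val_mk] at h1 h2 ⊢
      have hv := i.isLt
      rw [if_neg (show ¬ i.val / 2 = 8*t/2 by omega)] at h1 h2 ⊢
      omega
    · -- p = 3 : w = second leaf of v0
      exfalso
      simp only [Option.some.injEq, Prod.mk.injEq] at h
      obtain ⟨hw, -⟩ := h
      subst hw
      have hc : coordD t (Sum.inr ⟨8*t/2, by omega⟩ : Fin (8*t) ⊕ Fin (8*t/2+1)) = 0 := by
        simp [coordD]
      rw [hc] at h1
      exact absurd h1 (by norm_num)
  · simp only [graphD] at h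
    split_ifs at h with c0 c4
    · -- to v0
      exfalso
      simp only [Option.some.injEq, Prod.mk.injEq] at h
      obtain ⟨hw, -⟩ := h
      subst hw
      have hc : coordD t (Sum.inl ⟨0, Nat.pos_of_ne_zero (NeZero.ne _)⟩ :
          Fin (8*t) ⊕ Fin (8*t/2+1)) = 0 := rfl
      rw [hc] at h1
      exact absurd h1 (by norm_num)
    · simp only [Option.some.injEq, Prod.mk.injEq] at h
      obtain ⟨hw, -⟩ := h
      subst hw
      simp only [coordD, Fin.val_mk] at h1 h2 ⊢
      have hv := k.isLt
      rw [if_neg c4]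
      omega

lemma coordD_step {M : Type} {alg : Algo M} (t : ℕ) [NeZero (8*t)]
    (rD : Run (graphD (8*t)) (startD (8*t)) alg) (a : AgentsD (8*t)) (s : ℕ)
    (h1 : 1 ≤ coordD t (rD.pos a (s+1))) (h2 : coordD t (rD.pos a (s+1)) ≤ 8*t - 2) :
    coordD t (rD.pos a (s+1)) ≤ coordD t (rD.pos a s) + 1 ∧
      coordD t (rD.pos a s) ≤ coordD t (rD.pos a (s+1)) + 1 := by
  have hst := rD.step_pos a s
  rcases ho : alg.out (rD.mem a s) with _ | p
  · rw [ho] at hst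
    simp only [moveOf] at hst
    rw [hst]
    omega
  · rw [ho] at hst
    simp only [moveOf] at hst
    rcases hn : (graphD (8*t)).next (rD.pos a s) p with _ | ⟨w, e⟩
    · rw [hn] at hst
      simp only at hst
      rw [hst]
      omega
    · rw [hn] at hst
      simp only at hst
      rw [hst] at h1 h2 ⊢
      exact coordD_next t _ w p e hn h1 h2

/-- From a window constraint on the residue, get the genuine window constraint. -/
lemma genuine (t s : ℕ) (ht : 0 < t) (hs : s ≤ t) (j x : ℤ)
    (hj0 : 0 ≤ j) (hj1 : j < 8*t)
    (hx1 : j - s ≤ x) (hx2 : x ≤ j + s)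
    (hm1 : 2*t - 1 + s ≤ x % ((8*t:ℕ):ℤ)) (hm2 : x % ((8*t:ℕ):ℤ) ≤ 6*t - s) :
    2*t - 1 + s ≤ x ∧ x ≤ 6*t - s := by
  have hn : ((8*t:ℕ):ℤ) = 8*(t:ℤ) := by push_cast; ring
  rcases lt_or_ge x 0 with hneg | hx0
  · exfalso
    have hx8 : x % ((8*t:ℕ):ℤ) = x + 8*t := by
      conv_lhs => rw [show x = (x + ((8*t:ℕ):ℤ)) + ((8*t:ℕ):ℤ) * (-1) by ring]
      rw [Int.add_mul_emod_self_left, Int.emod_eq_of_lt (by omega) (by omega), hn]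
    omega
  · rcases lt_or_ge x (8*(t:ℤ)) with hlt | hge
    · rw [Int.emod_eq_of_lt (by omega) (by omega)] at hm1 hm2
      omega
    · exfalso
      have hx8 : x % ((8*t:ℕ):ℤ) = x - 8*t := by
        conv_lhs => rw [show x = (x - ((8*t:ℕ):ℤ)) + ((8*t:ℕ):ℤ) * 1 by ring]
        rw [Int.add_mul_emod_self_left, Int.emod_eq_of_lt (by omega) (by omega), hn]
      omega

end Indist

namespace Indist

lemma tr_zero (u : ℤ ⊕ ℤ) : tr 0 u = u := by
  rcases u with i | k <;> simp [tr]

set_option maxHeartbeats 1000000 in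
/-- Simulation of the run on `D (8t)` by the universal run, within the safety window. -/
lemma QD {M : Type} (alg : Algo M) (t : ℕ) [NeZero (8*t)]
    (rD : Run (graphD (8*t)) (startD (8*t)) alg) :
    ∀ s : ℕ, s ≤ t → ∀ j : ℤ, 0 ≤ j → j < 8*t → Ag j →
      ((2*t - 1 + s ≤ cU (st alg s j).1 % ((8*t:ℕ):ℤ) ∧
          cU (st alg s j).1 % ((8*t:ℕ):ℤ) ≤ 6*t - s) ∨
        (2*t - 1 + s ≤ (coordD t (rD.pos (bD t j) s) : ℤ) ∧
          (coordD t (rD.pos (bD t j) s) : ℤ) ≤ 6*t - s)) →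
      rD.pos (bD t j) s = piD t (st alg s j).1 ∧ rD.mem (bD t j) s = (st alg s j).2 := by
  have ht : 0 < t := by have := NeZero.ne (8*t); omega
  have hn8 : ((8*t:ℕ):ℤ) = 8*(t:ℤ) := by push_cast; ring
  intro s
  induction s with
  | zero =>
    intro hs j h0 h1 hAg hcond
    have hst0 : (st alg 0 j).1 = .inl j := rfl
    have hmodj : j % ((8*t:ℕ):ℤ) = j := Int.emod_eq_of_lt h0 (by omega)
    have hpos0 : rD.pos (bD t j) 0 = piD t (.inl j) := by
      rw [rD.pos_zero]
      show Sum.inl (bD t j).1 = _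
      simp only [piD, hmodj]
      refine congrArg Sum.inl (Fin.ext ?_)
      have := bD_val t j h0 h1 hAg
      simp only [Fin.val_mk]
      omega
    have hwin : 2*(t:ℤ) - 1 ≤ j ∧ j ≤ 6*t := by
      rcases hcond with ⟨ha, hb⟩ | ⟨ha, hb⟩
      · rw [hst0] at ha hb
        simp only [cU] at ha hb
        rw [hmodj] at ha hb
        push_cast at ha hb
        omega
      · rw [hpos0] at ha hb
        rw [coordD_piD t (.inl j : ℤ ⊕ ℤ)] at ha hb
        simp only [cU] at ha hb
        rw [hmodj] at ha hb
        push_cast at ha hb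
        omega
    refine ⟨hpos0, ?_⟩
    rw [rD.mem_zero, st_zero]
    have h' : startD (8*t) (bD t j) = piD t (.inl j) := by
      rw [← rD.pos_zero, hpos0]
    rw [h', deg_piD t _ (by simp only [cU]; omega) (by simp only [cU]; omega)]
  | succ s ih =>
    intro hs1
    have hs : s ≤ t := by omega
    -- Step part: positions at s+1, memories at s, genuine windows.
    have R : ∀ j : ℤ, 0 ≤ j → j < 8*t → Ag j →
        ((2*t - 1 + (s+1:ℕ) ≤ cU (st alg (s+1) j).1 % ((8*t:ℕ):ℤ) ∧
            cU (st alg (s+1) j).1 % ((8*t:ℕ):ℤ) ≤ 6*t - (s+1:ℕ)) ∨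
          (2*t - 1 + (s+1:ℕ) ≤ (coordD t (rD.pos (bD t j) (s+1)) : ℤ) ∧
            (coordD t (rD.pos (bD t j) (s+1)) : ℤ) ≤ 6*t - (s+1:ℕ))) →
        rD.pos (bD t j) (s+1) = piD t (st alg (s+1) j).1 ∧
        rD.pos (bD t j) s = piD t (st alg s j).1 ∧
        rD.mem (bD t j) s = (st alg s j).2 ∧
        (2*(t:ℤ) - 1 + (s:ℤ) + 1 ≤ cU (st alg (s+1) j).1 ∧
          cU (st alg (s+1) j).1 ≤ 6*(t:ℤ) - (s:ℤ) - 1) := by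
      intro j h0 h1 hAg hcond
      have hb1 := cU_st alg (s+1) j
      have hb0 := cU_st alg s j
      have hmv := cU_moveOf (st alg s j).1 (alg.out (st alg s j).2)
      have hfst : cU (st alg (s+1) j).1 =
          cU (moveOf U (st alg s j).1 (alg.out (st alg s j).2)).1 := by
        rw [st_succ_fst]
      rw [← hfst] at hmv
      push_cast at hb1 hb0
      -- condition at level s
      have key : (2*(t:ℤ) - 1 + s ≤ cU (st alg s j).1 % ((8*t:ℕ):ℤ) ∧
            cU (st alg s j).1 % ((8*t:ℕ):ℤ) ≤ 6*(t:ℤ) - s) ∨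
          (2*(t:ℤ) - 1 + s ≤ (coordD t (rD.pos (bD t j) s) : ℤ) ∧
            (coordD t (rD.pos (bD t j) s) : ℤ) ≤ 6*(t:ℤ) - s) := by
        rcases hcond with ⟨ha, hb⟩ | ⟨ha, hb⟩
        · left
          have hgen := genuine t (s+1) ht hs1 j (cU (st alg (s+1) j).1) h0 h1
            (by omega) (by omega) (by omega) (by omega)
          have hwin0 : 2*(t:ℤ) - 1 + s ≤ cU (st alg s j).1 ∧
              cU (st alg s j).1 ≤ 6*(t:ℤ) - s := by omega
          rw [Int.emod_eq_of_lt (by omega) (by omega)]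
          omega
        · right
          have hstep := coordD_step t rD (bD t j) s (by omega) (by omega)
          omega
      obtain ⟨hposS, hmemS⟩ := ih hs j h0 h1 hAg key
      -- genuine window at level s
      have hwin0 : 2*(t:ℤ) - 1 + s ≤ cU (st alg s j).1 ∧
          cU (st alg s j).1 ≤ 6*(t:ℤ) - s := by
        rcases key with ⟨ha, hb⟩ | ⟨ha, hb⟩
        · have hgen := genuine t s ht hs j (cU (st alg s j).1) h0 h1
            (by omega) (by omega) (by omega) (by omega)
          omega
        · rw [hposS, coordD_piD] at ha hb
          have hgen := genuine t s ht hs j (cU (st alg s j).1) h0 h1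
            (by omega) (by omega) (by omega) (by omega)
          omega
      have hsafe0l : 1 ≤ cU (st alg s j).1 := by omega
      have hsafe0r : cU (st alg s j).1 ≤ 8*(t:ℤ) - 2 := by omega
      have hstep : rD.pos (bD t j) (s+1) = piD t (st alg (s+1) j).1 := by
        rw [rD.step_pos, hposS, hmemS, moveOf_piD t _ hsafe0l hsafe0r]
        rfl
      -- genuine window at level s+1
      have hwin1 : 2*(t:ℤ) - 1 + (s:ℤ) + 1 ≤ cU (st alg (s+1) j).1 ∧
          cU (st alg (s+1) j).1 ≤ 6*(t:ℤ) - (s:ℤ) - 1 := by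
        rcases hcond with ⟨ha, hb⟩ | ⟨ha, hb⟩
        · have hgen := genuine t (s+1) ht hs1 j (cU (st alg (s+1) j).1) h0 h1
            (by omega) (by omega) (by omega) (by omega)
          omega
        · rw [hstep, coordD_piD] at ha hb
          have hgen := genuine t (s+1) ht hs1 j (cU (st alg (s+1) j).1) h0 h1
            (by omega) (by omega) (by omega) (by omega)
          omega
      exact ⟨hstep, hposS, hmemS, hwin1⟩
    -- Main conclusion at level s+1.
    intro j h0 h1 hAg hcond
    obtain ⟨hpos1, hposS, hmemS, hwin1⟩ := R j h0 h1 hAg hcond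
    refine ⟨hpos1, ?_⟩
    have hmv := cU_moveOf (st alg s j).1 (alg.out (st alg s j).2)
    have hfst : cU (st alg (s+1) j).1 =
        cU (moveOf U (st alg s j).1 (alg.out (st alg s j).2)).1 := by
      rw [st_succ_fst]
    rw [← hfst] at hmv
    have hsafe0l : 1 ≤ cU (st alg s j).1 := by omega
    have hsafe0r : cU (st alg s j).1 ≤ 8*(t:ℤ) - 2 := by omega
    have hsafe1l : 1 ≤ cU (st alg (s+1) j).1 := by omega
    have hsafe1r : cU (st alg (s+1) j).1 ≤ 8*(t:ℤ) - 2 := by omega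
    have hset : ({m : M | ∃ b : AgentsD (8*t), b ≠ bD t j ∧
          rD.pos b (s+1) = piD t (st alg (s+1) j).1 ∧ rD.mem b s = m})
        = {m : M | ∃ i : ℤ, Ag i ∧ i ≠ j ∧ (st alg (s+1) i).1 = (st alg (s+1) j).1 ∧
            (st alg s i).2 = m} := by
      ext x
      simp only [Set.mem_setOf_eq]
      constructor
      · -- an actual D agent meeting `bD t j` comes from a universal agent
        rintro ⟨b', hbne, hbpos, hbmem⟩
        obtain ⟨⟨v, hv⟩, hcl⟩ := b'
        have hsurj : (⟨⟨v, hv⟩, hcl⟩ : AgentsD (8*t)) = bD t (v:ℤ) := bD_surj t v hv hcl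
        have hcl' : v % 4 = 0 ∨ v % 4 = 3 := hcl
        rw [hsurj] at hbne hbpos hbmem
        have h0' : (0:ℤ) ≤ (v:ℤ) := by omega
        have h1' : (v:ℤ) < 8*t := by omega
        have hAg' : Ag (v:ℤ) := by unfold Ag; omega
        have hcond' : 2*(t:ℤ) - 1 + (s+1:ℕ) ≤ (coordD t (rD.pos (bD t (v:ℤ)) (s+1)) : ℤ) ∧
            (coordD t (rD.pos (bD t (v:ℤ)) (s+1)) : ℤ) ≤ 6*(t:ℤ) - (s+1:ℕ) := by
          rw [hbpos, coordD_piD]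
          rw [Int.emod_eq_of_lt (by omega) (by omega)]
          push_cast
          omega
        obtain ⟨hpos1', hposS', hmemS', hwin1'⟩ := R (v:ℤ) h0' h1' hAg' (Or.inr hcond')
        have hLeq : (st alg (s+1) (v:ℤ)).1 = (st alg (s+1) j).1 := by
          have hpieq : piD t (st alg (s+1) (v:ℤ)).1 = piD t (st alg (s+1) j).1 := by
            rw [← hpos1', hbpos]
          obtain ⟨m, hm⟩ := (piD_eq_iff t _ _).mp hpieq
          have hcu := cU_tr (2*(t:ℤ)*m) (st alg (s+1) (v:ℤ)).1
          rw [← hm] at hcu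
          have hm8 : (4:ℤ) * (2*(t:ℤ)*m) = 8*(t:ℤ)*m := by ring
          have hm0 : m = 0 := by
            rcases lt_trichotomy m 0 with hm' | hm' | hm'
            · nlinarith [hwin1.1, hwin1.2, hwin1'.1, hwin1'.2]
            · exact hm'
            · nlinarith [hwin1.1, hwin1.2, hwin1'.1, hwin1'.2]
          rw [hm0] at hm
          rw [hm, mul_zero, tr_zero]
        have hne' : (v:ℤ) ≠ j := by
          intro hc
          rw [hc] at hbne
          exact hbne rfl
        exact ⟨(v:ℤ), hAg', hne', hLeq, by rw [← hbmem, hmemS']⟩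
      · -- a universal agent meeting class `j` comes from an actual D agent
        rintro ⟨i, hAgi, hne, hposeq', hmem⟩
        have hn0 : ((8*t:ℕ):ℤ) ≠ 0 := by omega
        have hsplit := Int.emod_add_mul_ediv i ((8*t:ℕ):ℤ)
        set i' := i % ((8*t:ℕ):ℤ) with hi'
        set q := i / ((8*t:ℕ):ℤ) with hq
        have h0' : 0 ≤ i' := Int.emod_nonneg _ hn0
        have h1' : i' < 8*t := by
          have := Int.emod_lt_of_pos i (show (0:ℤ) < ((8*t:ℕ):ℤ) by omega)
          omega
        have hmul : (4:ℤ)*(2*(t:ℤ)*q) = ((8*t:ℕ):ℤ)*q := by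
          rw [hn8]; ring
        have hieq : i = i' + 4*(2*(t:ℤ)*q) := by omega
        have hAg' : Ag i' := by
          rw [hieq] at hAgi
          exact (Ag_add _ _).mp hAgi
        have hstTr1 : st alg (s+1) i = (tr (2*(t:ℤ)*q) (st alg (s+1) i').1, (st alg (s+1) i').2) := by
          rw [hieq]; exact st_tr alg (s+1) i' (2*(t:ℤ)*q)
        have hstTr0 : st alg s i = (tr (2*(t:ℤ)*q) (st alg s i').1, (st alg s i').2) := by
          rw [hieq]; exact st_tr alg s i' (2*(t:ℤ)*q)
        -- lift-side condition for i' at level s+1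
        have hcuEq : cU (st alg (s+1) i).1 = cU (st alg (s+1) i').1 + 8*(t:ℤ)*q := by
          rw [hstTr1]
          simp only
          rw [cU_tr]
          ring
        have hcond' : 2*(t:ℤ) - 1 + (s+1:ℕ) ≤ cU (st alg (s+1) i').1 % ((8*t:ℕ):ℤ) ∧
            cU (st alg (s+1) i').1 % ((8*t:ℕ):ℤ) ≤ 6*(t:ℤ) - (s+1:ℕ) := by
          have hmod : cU (st alg (s+1) i').1 % ((8*t:ℕ):ℤ) =
              cU (st alg (s+1) j).1 % ((8*t:ℕ):ℤ) := by
            rw [← hposeq', hcuEq]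
            rw [show cU (st alg (s+1) i').1 + 8*(t:ℤ)*q
                = cU (st alg (s+1) i').1 + ((8*t:ℕ):ℤ)*q by rw [hn8]]
            rw [Int.add_mul_emod_self_left]
          rw [hmod, Int.emod_eq_of_lt (by omega) (by omega)]
          push_cast
          omega
        obtain ⟨hpos1', hposS', hmemS', hwin1'⟩ := R i' h0' h1' hAg' (Or.inl hcond')
        refine ⟨bD t i', ?_, ?_, ?_⟩
        · intro hc
          have : i' = j := bD_inj t i' j h0' h1' hAg' h0 h1 hAg hc
          rw [this] at hcuEq
          rw [hposeq'] at hcuEq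
          have hq0 : q = 0 := by
            have h8q : 8*(t:ℤ)*q = 0 := by omega
            rcases mul_eq_zero.mp h8q with h' | h'
            · exact absurd h' (by omega)
            · exact h'
          rw [this, hq0] at hieq
          simp at hieq
          exact hne (by omega)
        · rw [hpos1']
          have : piD t (st alg (s+1) i').1 = piD t (tr (2*(t:ℤ)*q) (st alg (s+1) i').1) :=
            (piD_tr t q _).symm
          rw [this]
          have h2 : tr (2*(t:ℤ)*q) (st alg (s+1) i').1 = (st alg (s+1) i).1 := by
            rw [hstTr1]
          rw [h2, hposeq']
        · rw [hmemS']
          have : (st alg s i').2 = (st alg s i).2 := by rw [hstTr0]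
          rw [this, hmem]

    rw [rD.step_mem, hmemS, hposS, moveOf_piD t _ hsafe0l hsafe0r, hpos1,
      deg_piD t _ hsafe1l hsafe1r, hset]
    rfl

end Indist

/-- indistinguishability lemma.  For any deterministic algorithm and any
`t ≥ 1`, in the simultaneous-wake-up executions on configuration C and on configuration
`D (8t)`, the agent starting at the degree-2 node `v₁` of C and the agent starting at
node `v_{4t-1}` of `D (8t)` have identical memories during the first `t` rounds;
likewise, the agents at the clockwise neighbor `v₂` of C and at `v_{4t}` of `D (8t)`
have identical memories during the first `t` rounds. -/
theorem indistinguishability {M : Type} (alg : Algo M) (t : ℕ) (ht : 0 < t)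
    [NeZero (8 * t)]
    (rC : Run graphC startC alg)
    (rD : Run (graphD (8 * t)) (startD (8 * t)) alg) :
    ∀ s ≤ t,
      rC.mem 0 s = rD.mem ⟨⟨4 * t - 1, by omega⟩, Or.inr (show (4 * t - 1) % 4 = 3 by omega)⟩ s ∧
      rC.mem 1 s = rD.mem ⟨⟨4 * t, by omega⟩, Or.inl (show (4 * t) % 4 = 0 by omega)⟩ s := by
  intro s hst
  constructor
  · -- agent at v₁ of C versus agent at v_{4t-1} of D
    set j : ℤ := ((4*t - 1 : ℕ) : ℤ) with hj
    have hAg : Indist.Ag j := by unfold Indist.Ag; omega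
    have haC : Indist.aC j = 0 := by unfold Indist.aC; rw [if_pos (by omega)]
    have hcu := Indist.cU_st alg s j
    have hmod : Indist.cU (Indist.st alg s j).1 % ((8*t:ℕ):ℤ)
        = Indist.cU (Indist.st alg s j).1 :=
      Int.emod_eq_of_lt (by omega) (by omega)
    have hQD := Indist.QD alg t rD s hst j (by omega) (by omega) hAg
      (Or.inl ⟨by rw [hmod]; omega, by rw [hmod]; omega⟩)
    have hQC := Indist.QC alg rC s j hAg
    have hmemC : rC.mem 0 s = (Indist.st alg s j).2 := by rw [← haC]; exact hQC.2
    have hagent : (⟨⟨4*t-1, by omega⟩,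
          Or.inr (show (4 * t - 1) % 4 = 3 by omega)⟩ : AgentsD (8*t)) = Indist.bD t j :=
      Indist.bD_surj t (4*t-1) (by omega) (by omega)
    calc rC.mem 0 s = (Indist.st alg s j).2 := hmemC
      _ = rD.mem (Indist.bD t j) s := hQD.2.symm
      _ = _ := (congrArg (fun b => rD.mem b s) hagent).symm
  · -- agent at v₂ of C versus agent at v_{4t} of D
    set j : ℤ := ((4*t : ℕ) : ℤ) with hj
    have hAg : Indist.Ag j := by unfold Indist.Ag; omega
    have haC : Indist.aC j = 1 := by unfold Indist.aC; rw [if_neg (by omega)]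
    have hcu := Indist.cU_st alg s j
    have hmod : Indist.cU (Indist.st alg s j).1 % ((8*t:ℕ):ℤ)
        = Indist.cU (Indist.st alg s j).1 :=
      Int.emod_eq_of_lt (by omega) (by omega)
    have hQD := Indist.QD alg t rD s hst j (by omega) (by omega) hAg
      (Or.inl ⟨by rw [hmod]; omega, by rw [hmod]; omega⟩)
    have hQC := Indist.QC alg rC s j hAg
    have hmemC : rC.mem 1 s = (Indist.st alg s j).2 := by rw [← haC]; exact hQC.2
    have hagent : (⟨⟨4*t, by omega⟩,
          Or.inl (show (4 * t) % 4 = 0 by omega)⟩ : AgentsD (8*t)) = Indist.bD t j :=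
      Indist.bD_surj t (4*t) (by omega) (by omega)
    calc rC.mem 1 s = (Indist.st alg s j).2 := hmemC
      _ = rD.mem (Indist.bD t j) s := hQD.2.symm
      _ = _ := (congrArg (fun b => rD.mem b s) hagent).symm
end

section
/- Clone configurations cannot arise: if in the final configuration of an execution (where every agent's memory in each round is determined by the memories in the previous round via the same deterministic rule) two distinct occupied nodes have identical colored views, then in the initial configuration two distinct agents had identical enhanced views. -/
/-- The coloring of the nodes in round `T`: each node is colored by the multiset of the
memories of the agents located at it (so two occupied nodes get the same color exactly
when the agents at them can be matched up so that matched agents have equal memories). -/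
def colorAt {V A : Type} [Fintype A] [DecidableEq V] {G : PGraph V} {start : A → V}
    {alg : Memory → Option ℕ} {advWake : A → ℕ}
    (r : CRunW G start alg advWake) (T : ℕ) (v : V) : Multiset Memory :=
  (Finset.univ.val.filter fun a : A => r.pos a T = v).map fun a : A => r.mem a T


/-! ### Auxiliary lemmas on colored views -/

namespace PGraph

section SCV
variable {V : Type}

variable {C D : Type} {G : PGraph V} {col : V → C} {col₂ : V → D} {v w : V}

lemma cobs_nil : G.cobs col v [] = some ([], G.deg v, col v) := rfl

lemma cobs_cons_some {p : ℕ} {v₁ : V} {e : ℕ} (h : G.next v p = some (v₁, e)) (q : List ℕ) :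
    G.cobs col v (p :: q) = (G.cobs col v₁ q).map fun r => (e :: r.1, r.2) := by
  simp [cobs, h]

lemma cobs_cons_none {p : ℕ} (h : G.next v p = none) (q : List ℕ) :
    G.cobs col v (p :: q) = none := by
  simp [cobs, h]

namespace SameCView

lemma deg_eq (h : G.SameCView col v w) : G.deg v = G.deg w := by
  have := h []; rw [cobs_nil, cobs_nil] at this
  simp only [Option.some.injEq, Prod.mk.injEq] at this
  exact this.2.1

lemma col_eq (h : G.SameCView col v w) : col v = col w := by
  have := h []; rw [cobs_nil, cobs_nil] at this
  simp only [Option.some.injEq, Prod.mk.injEq] at this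
  exact this.2.2

lemma next_isSome (h : G.SameCView col v w) (p : ℕ) :
    (G.next v p).isSome ↔ (G.next w p).isSome := by
  constructor <;> intro hs
  · rcases Option.isSome_iff_exists.mp hs with ⟨⟨v₁, e⟩, hv⟩
    by_contra hns
    rw [Option.not_isSome_iff_eq_none] at hns
    have := h [p]
    rw [cobs_cons_some hv, cobs_cons_none hns, cobs_nil] at this
    simp at this
  · rcases Option.isSome_iff_exists.mp hs with ⟨⟨w₁, e⟩, hwp⟩
    by_contra hns
    rw [Option.not_isSome_iff_eq_none] at hns
    have := h [p]
    rw [cobs_cons_some hwp, cobs_cons_none hns, cobs_nil] at this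
    simp at this

lemma step (h : G.SameCView col v w) {p e₁ e₂ : ℕ} {v₁ w₁ : V}
    (hv : G.next v p = some (v₁, e₁)) (hw : G.next w p = some (w₁, e₂)) :
    e₁ = e₂ ∧ G.SameCView col v₁ w₁ := by
  have he : e₁ = e₂ := by
    have := h [p]
    rw [cobs_cons_some hv, cobs_cons_some hw, cobs_nil, cobs_nil] at this
    simp only [Option.map_some, Option.some.injEq, Prod.mk.injEq, List.cons.injEq] at this
    exact this.1.1
  subst he
  refine ⟨rfl, fun q => ?_⟩
  have := h (p :: q)
  rw [cobs_cons_some hv, cobs_cons_some hw] at this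
  have hinj : Function.Injective (fun r : List ℕ × ℕ × C => (e₁ :: r.1, r.2)) := by
    intro a b hab
    simpa [Prod.ext_iff] using hab
  exact Option.map_injective hinj this

/-- MAIN: recoloring lemma -/
lemma recolor (key : ∀ x y : V, G.SameCView col x y → col₂ x = col₂ y) :
    ∀ {v w : V}, G.SameCView col v w → G.SameCView col₂ v w := by
  intro v w h q
  induction q generalizing v w with
  | nil => rw [cobs_nil, cobs_nil, h.deg_eq, key v w h]
  | cons p q ih =>
    cases hv : G.next v p with
    | none =>
      have hw : G.next w p = none := by
        rw [← Option.not_isSome_iff_eq_none, ← h.next_isSome p, hv]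
        simp
      rw [cobs_cons_none hv, cobs_cons_none hw]
    | some ve =>
      obtain ⟨v₁, e₁⟩ := ve
      have hws : (G.next w p).isSome := (h.next_isSome p).mp (by simp [hv])
      rcases Option.isSome_iff_exists.mp hws with ⟨⟨w₁, e₂⟩, hw⟩
      obtain ⟨he, h₁⟩ := h.step hv hw
      subst he
      rw [cobs_cons_some hv, cobs_cons_some hw, ih h₁]

end SameCView

end SCV
end PGraph

/-! ### Multiset helpers -/

section MultisetHelpers

variable {α β : Type*}

/-- The multiset associated to an option. -/
def optM : Option β → Multiset β
  | none => 0
  | some b => {b}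

@[simp] lemma optM_none : (optM (none : Option β)) = 0 := rfl
@[simp] lemma optM_some (b : β) : optM (some b) = {b} := rfl

lemma aux_filterMap_eq_sum (f : α → Option β) (s : Multiset α) :
    s.filterMap f = (s.map fun a => optM (f a)).sum := by
  induction s using Multiset.induction with
  | empty => simp
  | cons a s ih =>
    cases hfa : f a with
    | none => simp [Multiset.filterMap_cons_none _ _ hfa, ih, hfa]
    | some b => simp [Multiset.filterMap_cons_some _ _ _ hfa, ih, hfa]

lemma aux_map_eq_sum_singleton (f : α → β) (s : Multiset α) :
    s.map f = (s.map fun a => ({f a} : Multiset β)).sum := by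
  induction s using Multiset.induction with
  | empty => simp
  | cons a s ih => simp [ih]

lemma aux_sum_map_filter {M : Type*} [AddCommMonoid M] (P : α → Prop) [DecidablePred P]
    (g : α → M) (s : Multiset α) :
    ((s.filter P).map g).sum = (s.map fun a => if P a then g a else 0).sum := by
  induction s using Multiset.induction with
  | empty => simp
  | cons a s ih =>
    by_cases hPa : P a
    · rw [Multiset.filter_cons_of_pos _ hPa]; simp [ih, hPa]
    · rw [Multiset.filter_cons_of_neg _ hPa]; simp [ih, hPa]

end MultisetHelpers

/-! ### Lemmas about executions with simultaneous wake-up -/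

/-- Extract the previous memory from a final memory, provided the last box records
the given move. -/
def lastF (pe : Option (ℕ × ℕ)) (m : Memory) : Option Memory :=
  match m.getLast? with
  | some (Box.mk _ mv _) => if mv = pe then some m.dropLast else none
  | none => none

lemma lastF_concat (pe : Option (ℕ × ℕ)) (l : Memory) (d : ℕ) (mv : Option (ℕ × ℕ))
    (met : List (List Box)) :
    lastF pe (l ++ [Box.mk d mv met]) = if mv = pe then some l else none := by
  rw [lastF, List.getLast?_concat, List.dropLast_concat]

section Exec

set_option linter.unusedSectionVars false

variable {V A : Type} [DecidableEq V] [Fintype A] {G : PGraph V}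
  {start : A → V} {alg : Memory → Option ℕ} (r : CRunW G start alg (fun _ => 0))

lemma wake0 (a : A) : r.wake a = 0 := Nat.le_zero.mp (r.wake_le a)

lemma wake_le' (a : A) (t : ℕ) : r.wake a ≤ t := by rw [wake0]; exact Nat.zero_le t

lemma pos0 (a : A) : r.pos a 0 = start a := r.pos_before a 0 (by rw [wake0])

lemma colorAt_sum (T : ℕ) (u : V) :
    colorAt r T u = ∑ a : A, if r.pos a T = u then ({r.mem a T} : Multiset Memory) else 0 := by
  rw [colorAt, aux_map_eq_sum_singleton, aux_sum_map_filter]; rfl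

lemma colorAt_filterMap (h : Memory → Option Memory) (T : ℕ) (u : V) :
    (colorAt r T u).filterMap h =
      ∑ a : A, if r.pos a T = u then optM (h (r.mem a T)) else 0 := by
  rw [colorAt, aux_filterMap_eq_sum, Multiset.map_map, aux_sum_map_filter]; rfl

/-- The decomposition of the round-`t` color of a node in terms of the round-`t+1`
colors of the node and its neighbors. -/
lemma colorAt_decomp (hwf : G.WellFormed) (t : ℕ) (x : V) :
    colorAt r t x =
      (colorAt r (t + 1) x).filterMap (lastF none) +
      ∑ p ∈ Finset.range (G.deg x),
        (match G.next x p with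
          | some (u, e) => (colorAt r (t + 1) u).filterMap (lastF (some (p, e)))
          | none => 0) := by
  have hterm : ∀ p ∈ Finset.range (G.deg x),
      (match G.next x p with
        | some (u, e) => (colorAt r (t + 1) u).filterMap (lastF (some (p, e)))
        | none => (0 : Multiset Memory)) =
      ∑ a : A, (match G.next x p with
        | some (u, e) =>
            if r.pos a (t + 1) = u then optM (lastF (some (p, e)) (r.mem a (t + 1))) else 0
        | none => (0 : Multiset Memory)) := by
    intro p _
    cases hnp : G.next x p with
    | none => simp
    | some ue => obtain ⟨u, e⟩ := ue; exact colorAt_filterMap r _ _ _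
  rw [colorAt_sum, colorAt_filterMap, Finset.sum_congr rfl hterm, Finset.sum_comm,
    ← Finset.sum_add_distrib]
  apply Finset.sum_congr rfl
  intro a _
  obtain ⟨met, -, hmem⟩ := r.step_mem a t (wake_le' r a t)
  have hpos := r.step_pos a t (wake_le' r a t)
  cases halg : alg (r.mem a t) with
  | none =>
    rw [halg] at hmem hpos
    simp only [moveOf] at hmem hpos
    rw [hpos] at hmem
    rw [hmem, hpos]
    have hz : ∀ p ∈ Finset.range (G.deg x),
        (match G.next x p with
          | some (u, e) => if r.pos a t = u then
              optM (lastF (some (p, e))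
                (r.mem a t ++ [Box.mk (G.deg (r.pos a t)) none met])) else 0
          | none => (0 : Multiset Memory)) = 0 := by
      intro p _
      cases hnp : G.next x p with
      | none => rfl
      | some ue =>
        obtain ⟨u, e⟩ := ue
        simp only [hnp, lastF_concat]
        split_ifs with h1 h2
        · exact absurd h2 (by simp)
        · rfl
        · rfl
    rw [Finset.sum_eq_zero hz, lastF_concat, if_pos rfl]
    simp
  | some p₀ =>
    rw [halg] at hmem hpos
    cases hna : G.next (r.pos a t) p₀ with
    | none =>
      simp only [moveOf, hna] at hmem hpos
      rw [hpos] at hmem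
      rw [hmem, hpos]
      have hz : ∀ p ∈ Finset.range (G.deg x),
          (match G.next x p with
            | some (u, e) => if r.pos a t = u then
                optM (lastF (some (p, e))
                  (r.mem a t ++ [Box.mk (G.deg (r.pos a t)) none met])) else 0
            | none => (0 : Multiset Memory)) = 0 := by
        intro p _
        cases hnp : G.next x p with
        | none => rfl
        | some ue =>
          obtain ⟨u, e⟩ := ue
          simp only [hnp, lastF_concat]
          split_ifs with h1 h2
          · exact absurd h2 (by simp)
          · rfl
          · rfl
      rw [Finset.sum_eq_zero hz, lastF_concat, if_pos rfl]
      simp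
    | some ue =>
      obtain ⟨u₀, e₀⟩ := ue
      simp only [moveOf, hna] at hmem hpos
      rw [hpos] at hmem
      rw [hmem, hpos]
      simp only [lastF_concat]
      have hstay : (if u₀ = x then
          optM (if (some (p₀, e₀) : Option (ℕ × ℕ)) = none then some (r.mem a t) else none)
          else 0) = (0 : Multiset Memory) := by
        split_ifs with h1 h2
        · exact absurd h2 (by simp)
        · rfl
        · rfl
      rw [hstay, zero_add]
      by_cases hx : r.pos a t = x
      · rw [if_pos hx]
        have hp₀mem : p₀ ∈ Finset.range (G.deg x) := by
          rw [Finset.mem_range, ← hwf.1 x p₀, ← hx, hna]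
          rfl
        rw [Finset.sum_eq_single_of_mem p₀ hp₀mem]
        · rw [← hx]
          simp [hna]
        · intro p _ hp
          cases hnp : G.next x p with
          | none => rfl
          | some ue' =>
            obtain ⟨u, e⟩ := ue'
            simp only [hnp]
            split_ifs with h1 h2
            · exact absurd (congrArg Prod.fst (Option.some.inj h2)).symm hp
            · rfl
            · rfl
      · rw [if_neg hx]
        refine (Finset.sum_eq_zero ?_).symm
        intro p _
        cases hnp : G.next x p with
        | none => rfl
        | some ue' =>
          obtain ⟨u, e⟩ := ue'
          simp only [hnp]
          split_ifs with h1 h2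
          · exfalso
            have hpp : p₀ = p := congrArg Prod.fst (Option.some.inj h2)
            have hee : e₀ = e := congrArg Prod.snd (Option.some.inj h2)
            subst hpp
            subst hee
            have hb1 := (hwf.2 _ _ _ _ hnp).2
            have hb2 := (hwf.2 _ _ _ _ hna).2
            rw [← h1] at hb1
            rw [hb1] at hb2
            exact hx (congrArg Prod.fst (Option.some.inj hb2)).symm
          · rfl
          · rfl

/-- Same colored view one round later implies equal colors one round earlier. -/
lemma color_prev (hwf : G.WellFormed) {t : ℕ} {x y : V}
    (h : G.SameCView (colorAt r (t + 1)) x y) : colorAt r t x = colorAt r t y := by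
  have hdeg := h.deg_eq
  rw [colorAt_decomp r hwf t x, colorAt_decomp r hwf t y, h.col_eq, hdeg]
  congr 1
  apply Finset.sum_congr rfl
  intro p hp
  have hpx : p < G.deg x := by rw [hdeg]; exact Finset.mem_range.mp hp
  have hxs : (G.next x p).isSome := (hwf.1 x p).mpr hpx
  obtain ⟨⟨u, e⟩, hxu⟩ := Option.isSome_iff_exists.mp hxs
  obtain ⟨⟨u', e'⟩, hyu⟩ := Option.isSome_iff_exists.mp ((h.next_isSome p).mp hxs)
  obtain ⟨he, h'⟩ := h.step hxu hyu
  subst he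
  simp only [hxu, hyu]
  rw [h'.col_eq]

lemma scv_prev (hwf : G.WellFormed) {t : ℕ} {v w : V}
    (h : G.SameCView (colorAt r (t + 1)) v w) : G.SameCView (colorAt r t) v w :=
  PGraph.SameCView.recolor (fun _ _ hxy => color_prev r hwf hxy) h

/-- One step of the descent: clones one round later give clones one round earlier. -/
lemma descend_step (hwf : G.WellFormed) {t : ℕ} {v w : V} (hvw : v ≠ w)
    (hv : ∃ a : A, r.pos a (t + 1) = v)
    (h : G.SameCView (colorAt r (t + 1)) v w) :
    ∃ v' w' : V, v' ≠ w' ∧ (∃ a : A, r.pos a t = v') ∧ (∃ b : A, r.pos b t = w') ∧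
      G.SameCView (colorAt r t) v' w' := by
  obtain ⟨a, ha⟩ := hv
  have hmema : r.mem a (t + 1) ∈ colorAt r (t + 1) v := by
    rw [colorAt]
    exact Multiset.mem_map_of_mem _
      (Multiset.mem_filter.mpr ⟨Finset.mem_val.mpr (Finset.mem_univ a), ha⟩)
  rw [h.col_eq] at hmema
  obtain ⟨b, hbfil, hmemeq⟩ := Multiset.mem_map.mp hmema
  have hb : r.pos b (t + 1) = w := (Multiset.mem_filter.mp hbfil).2
  obtain ⟨mta, -, hma⟩ := r.step_mem a t (wake_le' r a t)
  obtain ⟨metb, -, hmb⟩ := r.step_mem b t (wake_le' r b t)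
  have hposa := r.step_pos a t (wake_le' r a t)
  have hposb := r.step_pos b t (wake_le' r b t)
  have hpre : r.mem b t = r.mem a t := by
    have := congrArg List.dropLast hmemeq
    rwa [hma, hmb, List.dropLast_concat, List.dropLast_concat] at this
  have hbox : (moveOf G (r.pos b t) (alg (r.mem b t))).2
      = (moveOf G (r.pos a t) (alg (r.mem a t))).2 := by
    have hlast := congrArg List.getLast? hmemeq
    rw [hma, hmb, List.getLast?_concat, List.getLast?_concat] at hlast
    have hb2 := Option.some.inj hlast
    injection hb2 with hd hmv hmet
  have hne : r.pos b t ≠ r.pos a t := by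
    intro hEq
    apply hvw
    rw [← ha, ← hb, hposa, hposb, hpre, hEq]
  have hprev : G.SameCView (colorAt r t) v w := scv_prev r hwf h
  cases halg : alg (r.mem a t) with
  | none =>
    have hav : r.pos a t = v := by rw [← ha, hposa, halg]; rfl
    have hbw : r.pos b t = w := by rw [← hb, hposb, hpre, halg]; rfl
    exact ⟨v, w, hvw, ⟨a, hav⟩, ⟨b, hbw⟩, hprev⟩
  | some p₀ =>
    cases hna : G.next (r.pos a t) p₀ with
    | none =>
      have hav : r.pos a t = v := by rw [← ha, hposa, halg]; simp [moveOf, hna]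
      have hmva : (moveOf G (r.pos a t) (alg (r.mem a t))).2 = none := by
        rw [halg]; simp [moveOf, hna]
      have hbw : r.pos b t = w := by
        rw [← hb, hposb, hpre, halg]
        cases hnb : G.next (r.pos b t) p₀ with
        | none => simp [moveOf, hnb]
        | some ue =>
          exfalso
          obtain ⟨u₁, e₁⟩ := ue
          rw [hmva, hpre, halg] at hbox
          simp [moveOf, hnb] at hbox
      exact ⟨v, w, hvw, ⟨a, hav⟩, ⟨b, hbw⟩, hprev⟩
    | some ue =>
      obtain ⟨u₀, e₀⟩ := ue
      have hmva : (moveOf G (r.pos a t) (alg (r.mem a t))).2 = some (p₀, e₀) := by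
        rw [halg]; simp [moveOf, hna]
      have hav : u₀ = v := by rw [← ha, hposa, halg]; simp [moveOf, hna]
      cases hnb : G.next (r.pos b t) p₀ with
      | none =>
        exfalso
        rw [hmva, hpre, halg] at hbox
        simp [moveOf, hnb] at hbox
      | some ue' =>
        obtain ⟨u₁, e₁⟩ := ue'
        have hbox' : (p₀, e₁) = (p₀, e₀) := by
          rw [hmva, hpre, halg] at hbox
          simp only [moveOf, hnb] at hbox
          exact Option.some.inj hbox
        have he₁ : e₁ = e₀ := congrArg Prod.snd hbox'
        have hbw : u₁ = w := by rw [← hb, hposb, hpre, halg]; simp [moveOf, hnb]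
        have hbackv : G.next v e₀ = some (r.pos a t, p₀) := by
          rw [← hav]; exact (hwf.2 _ _ _ _ hna).2
        have hbackw : G.next w e₀ = some (r.pos b t, p₀) := by
          rw [← hbw, ← he₁]; exact (hwf.2 _ _ _ _ hnb).2
        obtain ⟨-, hstep⟩ := hprev.step hbackv hbackw
        exact ⟨r.pos a t, r.pos b t, fun hEq => hne hEq.symm, ⟨a, rfl⟩, ⟨b, rfl⟩, hstep⟩

lemma descend_all (hwf : G.WellFormed) :
    ∀ (T : ℕ) (v w : V), v ≠ w → (∃ a : A, r.pos a T = v) →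
      G.SameCView (colorAt r T) v w →
      ∃ v₀ w₀ : V, v₀ ≠ w₀ ∧ (∃ a : A, r.pos a 0 = v₀) ∧ (∃ b : A, r.pos b 0 = w₀) ∧
        G.SameCView (colorAt r 0) v₀ w₀
  | 0, v, w, h1, h2, h4 => by
    obtain ⟨a, ha⟩ := h2
    have hocc : colorAt r 0 v = colorAt r 0 w := h4.col_eq
    have hw : ∃ b : A, r.pos b 0 = w := by
      have hmema : r.mem a 0 ∈ colorAt r 0 v := by
        rw [colorAt]
        exact Multiset.mem_map_of_mem _
          (Multiset.mem_filter.mpr ⟨Finset.mem_val.mpr (Finset.mem_univ a), ha⟩)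
      rw [hocc] at hmema
      obtain ⟨b, hbfil, -⟩ := Multiset.mem_map.mp hmema
      exact ⟨b, (Multiset.mem_filter.mp hbfil).2⟩
    exact ⟨v, w, h1, ⟨a, ha⟩, hw, h4⟩
  | (t + 1), v, w, h1, h2, h4 => by
    obtain ⟨v', w', h1', h2', -, h4'⟩ := descend_step r hwf h1 h2 h4
    exact descend_all hwf t v' w' h1' h2' h4'

lemma occ_iff (u : V) : (∃ c : A, start c = u) ↔ colorAt r 0 u ≠ 0 := by
  constructor
  · rintro ⟨c, rfl⟩ h0
    have hmem : r.mem c 0 ∈ colorAt r 0 (start c) := by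
      rw [colorAt]
      exact Multiset.mem_map_of_mem _
        (Multiset.mem_filter.mpr ⟨Finset.mem_val.mpr (Finset.mem_univ c), pos0 r c⟩)
    rw [h0] at hmem
    exact Multiset.notMem_zero _ hmem
  · intro hne
    obtain ⟨m, hm⟩ := Multiset.exists_mem_of_ne_zero hne
    obtain ⟨c, hcf, -⟩ := Multiset.mem_map.mp hm
    exact ⟨c, by rw [← pos0 r c]; exact (Multiset.mem_filter.mp hcf).2⟩

end Exec

/-- clone configurations cannot arise.  In an execution (with simultaneous
wake-up in round 0, memories evolving deterministically by appending one memory box per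
round), if at some round `T` two distinct occupied nodes have identical colored views,
then in the initial configuration two distinct agents had identical enhanced views. -/
theorem clone_implies_equal_enhanced_views {V A : Type} [Fintype V] [DecidableEq V]
    [Fintype A] (G : PGraph V) (hwf : G.WellFormed) (hconn : G.Connected)
    (start : A → V) (alg : Memory → Option ℕ)
    (r : CRunW G start alg (fun _ => 0)) (T : ℕ) (v w : V) (hvw : v ≠ w)
    (hv : ∃ a : A, r.pos a T = v) (hw : ∃ a : A, r.pos a T = w)
    (hcol : G.SameCView (colorAt r T) v w) :
    ∃ a b : A, a ≠ b ∧
      G.SameEView (fun u => decide (∃ c : A, start c = u)) (start a) (start b) := by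
  obtain ⟨v₀, w₀, h1, ⟨a, ha⟩, ⟨b, hb⟩, h4⟩ := descend_all r hwf T v w hvw hv hcol
  rw [pos0] at ha hb
  refine ⟨a, b, fun hab => h1 (by rw [← ha, ← hb, hab]), ?_⟩
  have key : ∀ x y : V, G.SameCView (colorAt r 0) x y →
      (fun u => decide (∃ c : A, start c = u)) x = (fun u => decide (∃ c : A, start c = u)) y := by
    intro x y hxy
    simp only
    have hcxy : colorAt r 0 x = colorAt r 0 y := hxy.col_eq
    exact decide_eq_decide.mpr (by rw [occ_iff r x, occ_iff r y, hcxy])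
  have hfin := PGraph.SameCView.recolor key h4
  rw [ha, hb]
  exact hfin
end
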